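/- arXiv:1910.01797 — 5 statements merged into one kernel-verified Lean document; each statement's English description precedes it below -/
import Mathlib

section
/- For a totally disconnected locally compact group G, the function d(U,V) = log([U : U ∩ V] · [V : U ∩ V]) defines a metric on the set COS(G) of compact open subgroups of G. -/
/-- The distance `d(U,V) = log([U : U ∩ V] · [V : U ∩ V])` on compact open subgroups. -/
noncomputable def cosDist {G : Type*} [Group G] (U V : Subgroup G) : ℝ :=
  Real.log ((V.relIndex U * U.relIndex V : ℕ))

/-- An open subgroup has finite (nonzero) relative index in a compact subgroup. -/
lemma relindex_ne_zero_of_compact_of_open {G : Type*} [Group G] [TopologicalSpace G]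
    [IsTopologicalGroup G] {U V : Subgroup G} (hUc : IsCompact (U : Set G))
    (hVo : IsOpen (V : Set G)) : V.relIndex U ≠ 0 := by
  have : CompactSpace U := isCompact_iff_compactSpace.mp hUc
  have hopen : IsOpen ((V.subgroupOf U : Subgroup U) : Set U) := by
    have : ((V.subgroupOf U : Subgroup U) : Set U) = Subtype.val ⁻¹' (V : Set G) := rfl
    rw [this]
    exact hVo.preimage continuous_subtype_val
  have : Finite (U ⧸ V.subgroupOf U) := Subgroup.quotient_finite_of_isOpen _ hopen
  exact Subgroup.index_ne_zero_of_finite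

/-- Key triangle-type inequality for relative indices of compact open subgroups. -/
lemma relindex_triangle {G : Type*} [Group G] [TopologicalSpace G] [IsTopologicalGroup G]
    {U V W : Subgroup G} (hUc : IsCompact (U : Set G))
    (hVc : IsCompact (V : Set G)) (hVo : IsOpen (V : Set G))
    (hWo : IsOpen (W : Set G)) :
    W.relIndex U ≤ W.relIndex V * V.relIndex U := by
  have hVU : V.relIndex U ≠ 0 := relindex_ne_zero_of_compact_of_open hUc hVo
  have hWU : W.relIndex U ≠ 0 := relindex_ne_zero_of_compact_of_open hUc hWo
  have hWV : W.relIndex V ≠ 0 := relindex_ne_zero_of_compact_of_open hVc hWo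
  calc W.relIndex U ≤ (W ⊓ V).relIndex U :=
        Subgroup.relIndex_le_of_le_left inf_le_left
          (Subgroup.relIndex_inf_ne_zero hWU hVU)
    _ = W.relIndex (V ⊓ U) * V.relIndex U :=
        (Subgroup.relIndex_inf_mul_relIndex W V U).symm
    _ ≤ W.relIndex V * V.relIndex U :=
        Nat.mul_le_mul_right _ (Subgroup.relIndex_le_of_le_right inf_le_left hWV)

/-- For a t.d.l.c. group `G`, `cosDist` is a metric on the set of compact open subgroups:
it is nonnegative, symmetric, vanishes exactly on the diagonal, and satisfies the triangle
inequality. -/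
theorem cosDist_is_metric {G : Type*} [Group G] [TopologicalSpace G] [IsTopologicalGroup G]
    [LocallyCompactSpace G] [TotallyDisconnectedSpace G] [T2Space G] :
    (∀ U V : Subgroup G, IsCompact (U : Set G) → IsOpen (U : Set G) →
      IsCompact (V : Set G) → IsOpen (V : Set G) →
      0 ≤ cosDist U V ∧ cosDist U V = cosDist V U ∧ (cosDist U V = 0 ↔ U = V)) ∧
    (∀ U V W : Subgroup G, IsCompact (U : Set G) → IsOpen (U : Set G) →
      IsCompact (V : Set G) → IsOpen (V : Set G) →
      IsCompact (W : Set G) → IsOpen (W : Set G) →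
      cosDist U W ≤ cosDist U V + cosDist V W) := by
  constructor
  · intro U V hUc hUo hVc hVo
    have h1 : V.relIndex U ≠ 0 := relindex_ne_zero_of_compact_of_open hUc hVo
    have h2 : U.relIndex V ≠ 0 := relindex_ne_zero_of_compact_of_open hVc hUo
    have hprod : V.relIndex U * U.relIndex V ≠ 0 := mul_ne_zero h1 h2
    have hone : (1 : ℝ) ≤ ((V.relIndex U * U.relIndex V : ℕ) : ℝ) := by
      exact_mod_cast Nat.one_le_iff_ne_zero.mpr hprod
    refine ⟨Real.log_nonneg hone, ?_, ?_⟩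
    · unfold cosDist; rw [mul_comm]
    · constructor
      · intro h
        have hlog : Real.log ((V.relIndex U * U.relIndex V : ℕ) : ℝ) = 0 := h
        have : ((V.relIndex U * U.relIndex V : ℕ) : ℝ) = 1 := by
          rcases Real.log_eq_zero.mp hlog with h' | h' | h'
          · exact absurd h' (by positivity)
          · exact h'
          · nlinarith
        have hnat : V.relIndex U * U.relIndex V = 1 := by exact_mod_cast this
        have hb := Nat.eq_one_of_mul_eq_one_left hnat
        have ha := Nat.eq_one_of_mul_eq_one_right hnat
        exact le_antisymm (Subgroup.relIndex_eq_one.mp ha) (Subgroup.relIndex_eq_one.mp hb)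
      · rintro rfl
        unfold cosDist
        simp [Subgroup.relIndex_self]
  · intro U V W hUc hUo hVc hVo hWc hWo
    have hVU : V.relIndex U ≠ 0 := relindex_ne_zero_of_compact_of_open hUc hVo
    have hUV : U.relIndex V ≠ 0 := relindex_ne_zero_of_compact_of_open hVc hUo
    have hWV : W.relIndex V ≠ 0 := relindex_ne_zero_of_compact_of_open hVc hWo
    have hVW : V.relIndex W ≠ 0 := relindex_ne_zero_of_compact_of_open hWc hVo
    have hWU : W.relIndex U ≠ 0 := relindex_ne_zero_of_compact_of_open hUc hWo
    have hUW : U.relIndex W ≠ 0 := relindex_ne_zero_of_compact_of_open hWc hUo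
    have k1 : W.relIndex U ≤ W.relIndex V * V.relIndex U :=
      relindex_triangle hUc hVc hVo hWo
    have k2 : U.relIndex W ≤ U.relIndex V * V.relIndex W :=
      relindex_triangle hWc hVc hVo hUo
    have key : (W.relIndex U * U.relIndex W : ℕ) ≤
        (V.relIndex U * U.relIndex V) * (W.relIndex V * V.relIndex W) := by
      calc W.relIndex U * U.relIndex W
          ≤ (W.relIndex V * V.relIndex U) * (U.relIndex V * V.relIndex W) :=
            Nat.mul_le_mul k1 k2
        _ = (V.relIndex U * U.relIndex V) * (W.relIndex V * V.relIndex W) := by ring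
    unfold cosDist
    rw [← Real.log_mul (by positivity) (by positivity)]
    apply Real.log_le_log (by positivity)
    push_cast
    exact_mod_cast key
end

section
/- Let G be a t.d.l.c. group and α an automorphism of G. Then α is uniscalar (i.e., s(α) = 1 = s(α⁻¹)) if and only if there exists a compact open subgroup U with α(U) = U. -/
/-- The scale of an automorphism `α` of a t.d.l.c. group:
`s(α) = min{[α(U) : α(U) ∩ U] : U a compact open subgroup}`. -/
noncomputable def autScale {G : Type*} [Group G] [TopologicalSpace G] (α : G ≃* G) : ℕ :=
  sInf {n : ℕ | ∃ U : Subgroup G, IsCompact (U : Set G) ∧ IsOpen (U : Set G) ∧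
    n = U.relIndex (U.map α.toMonoidHom)}

open MeasureTheory MeasureTheory.Measure

/-- An open subgroup has nonzero relative index in any compact subgroup. -/
lemma relindex_ne_zero_of_isOpen_of_isCompact {G : Type*} [Group G] [TopologicalSpace G]
    [IsTopologicalGroup G] (W K : Subgroup G) (hW : IsOpen (W : Set G))
    (hK : IsCompact (K : Set G)) : W.relIndex K ≠ 0 := by
  haveI : CompactSpace K := isCompact_iff_compactSpace.mp hK
  haveI : Finite (K ⧸ W.subgroupOf K) := by
    apply Subgroup.quotient_finite_of_isOpen
    have : ((W.subgroupOf K : Subgroup K) : Set K) = Subtype.val ⁻¹' (W : Set G) := rfl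
    rw [this]
    exact hW.preimage continuous_subtype_val
  exact Subgroup.index_ne_zero_of_finite


/-- If the scale set's inf is 1, there is a compact open `U` with `α(U) ≤ U`. -/
lemma exists_mapsTo_of_autScale_eq_one {G : Type*} [Group G] [TopologicalSpace G]
    (α : G ≃* G) (h : autScale α = 1) :
    ∃ U : Subgroup G, IsCompact (U : Set G) ∧ IsOpen (U : Set G) ∧
      U.map α.toMonoidHom ≤ U := by
  set S := {n : ℕ | ∃ U : Subgroup G, IsCompact (U : Set G) ∧ IsOpen (U : Set G) ∧
    n = U.relIndex (U.map α.toMonoidHom)} with hS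
  have hne : S.Nonempty := by
    by_contra hcon
    rw [Set.not_nonempty_iff_eq_empty] at hcon
    rw [autScale, ← hS, hcon, Nat.sInf_empty] at h
    exact one_ne_zero h.symm
  have hmem : (1 : ℕ) ∈ S := by
    have := Nat.sInf_mem hne
    rwa [show sInf S = 1 from h] at this
  obtain ⟨U, hUc, hUo, hU1⟩ := hmem
  refine ⟨U, hUc, hUo, ?_⟩
  rw [← Subgroup.subgroupOf_eq_top]
  rw [Subgroup.relIndex] at hU1
  exact Subgroup.index_eq_one.mp hU1.symm

/-- If 1 is in the scale set and no member is 0, the scale is 1. -/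
lemma autScale_eq_one_of {G : Type*} [Group G] [TopologicalSpace G] [IsTopologicalGroup G]
    (α : G ≃* G) (hα' : Continuous α)
    (U : Subgroup G) (hUc : IsCompact (U : Set G)) (hUo : IsOpen (U : Set G))
    (hU : U.map α.toMonoidHom = U) : autScale α = 1 := by
  have h1 : (1 : ℕ) ∈ {n : ℕ | ∃ U : Subgroup G, IsCompact (U : Set G) ∧ IsOpen (U : Set G) ∧
      n = U.relIndex (U.map α.toMonoidHom)} :=
    ⟨U, hUc, hUo, by rw [hU, Subgroup.relIndex_self]⟩
  refine le_antisymm (Nat.sInf_le h1) (Nat.one_le_iff_ne_zero.mpr ?_)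
  intro h0
  have hmem := Nat.sInf_mem ⟨1, h1⟩
  rw [show autScale α = sInf _ from rfl] at h0
  rw [h0] at hmem
  obtain ⟨W, hWc, hWo, hW0⟩ := hmem
  have hKc : IsCompact ((W.map α.toMonoidHom : Subgroup G) : Set G) := by
    have : ((W.map α.toMonoidHom : Subgroup G) : Set G) = ⇑α '' (W : Set G) := by
      ext x; simp [Subgroup.mem_map]
    rw [this]
    exact hWc.image hα'
  exact relindex_ne_zero_of_isOpen_of_isCompact W _ hWo hKc hW0.symm


/-- For a t.d.l.c. group `G` and a topological automorphism `α`, `α` is uniscalar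
(`s(α) = 1 = s(α⁻¹)`) iff there is a compact open subgroup `U` with `α(U) = U`. -/
theorem uniscalar_iff_stabilizes_compact_open {G : Type*} [Group G] [TopologicalSpace G]
    [IsTopologicalGroup G] [LocallyCompactSpace G] [TotallyDisconnectedSpace G] [T2Space G]
    (α : G ≃* G) (hα : Continuous α) (hα' : Continuous α.symm) :
    (autScale α = 1 ∧ autScale α.symm = 1) ↔
      ∃ U : Subgroup G, IsCompact (U : Set G) ∧ IsOpen (U : Set G) ∧
        U.map α.toMonoidHom = U := by

  constructor
  · rintro ⟨h1, h2⟩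
    obtain ⟨U, hUc, hUo, hUsub⟩ := exists_mapsTo_of_autScale_eq_one α h1
    obtain ⟨V, hVc, hVo, hVsub⟩ := exists_mapsTo_of_autScale_eq_one α.symm h2
    -- set-level inclusions
    have hUsub' : (U : Set G) ⊆ ⇑α ⁻¹' (U : Set G) := fun x hx =>
      hUsub (Subgroup.mem_map.mpr ⟨x, hx, rfl⟩)
    have hVsub' : ⇑α ⁻¹' (V : Set G) ⊆ (V : Set G) := fun y hy => by
      have : α.symm (α y) ∈ V := hVsub (Subgroup.mem_map.mpr ⟨α y, hy, rfl⟩)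
      simpa using this
    -- Haar measure
    letI : MeasurableSpace G := borel G
    haveI : BorelSpace G := ⟨rfl⟩
    let K₀ : TopologicalSpace.PositiveCompacts G :=
      ⟨⟨U, hUc⟩, by
        show (interior (U : Set G)).Nonempty
        rw [hUo.interior_eq]; exact ⟨1, U.one_mem⟩⟩
    let μ : Measure G := haarMeasure K₀
    let ν : Measure G := μ.map ⇑α
    haveI : IsHaarMeasure μ := isHaarMeasure_haarMeasure K₀
    haveI : IsHaarMeasure ν := α.isHaarMeasure_map μ hα hα'
    set c : NNReal := haarScalarFactor ν μ with hc
    have key : ∀ s : Set G, IsOpen s → ν s = c • μ s := fun s hs =>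
      measure_isHaarMeasure_eq_smul_of_isOpen ν μ hs
    have hmap : ∀ s : Set G, MeasurableSet s → ν s = μ (⇑α ⁻¹' s) := fun s hs =>
      Measure.map_apply hα.measurable hs
    have μU0 : μ (U : Set G) ≠ 0 := hUo.measure_ne_zero μ ⟨1, U.one_mem⟩
    have μUt : μ (U : Set G) ≠ ⊤ := hUc.measure_lt_top.ne
    have μV0 : μ (V : Set G) ≠ 0 := hVo.measure_ne_zero μ ⟨1, V.one_mem⟩
    have μVt : μ (V : Set G) ≠ ⊤ := hVc.measure_lt_top.ne
    -- c ≥ 1 from U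
    have hc1 : (1 : ENNReal) ≤ (c : ENNReal) := by
      have h := key (U : Set G) hUo
      rw [hmap (U : Set G) hUo.measurableSet] at h
      have hle : μ (U : Set G) ≤ c • μ (U : Set G) := h ▸ measure_mono hUsub'
      rw [ENNReal.smul_def, smul_eq_mul] at hle
      refine (ENNReal.mul_le_mul_iff_left μU0 μUt).mp ?_
      rw [one_mul]; exact hle
    -- c ≤ 1 from V
    have hc2 : (c : ENNReal) ≤ 1 := by
      have h := key (V : Set G) hVo
      rw [hmap (V : Set G) hVo.measurableSet] at h
      have hle : c • μ (V : Set G) ≤ μ (V : Set G) := h ▸ measure_mono hVsub'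
      rw [ENNReal.smul_def, smul_eq_mul] at hle
      exact (ENNReal.mul_le_mul_iff_left μV0 μVt).mp (by rw [one_mul]; exact hle)
    have hceq : (c : ENNReal) = 1 := le_antisymm hc2 hc1
    -- μ(α⁻¹U) = μU, deduce α⁻¹U = U
    have hμeq : μ (⇑α ⁻¹' (U : Set G)) = μ (U : Set G) := by
      have h := key (U : Set G) hUo
      rw [hmap (U : Set G) hUo.measurableSet] at h
      rw [h, ENNReal.smul_def, smul_eq_mul, hceq, one_mul]
    have hdiff : μ (⇑α ⁻¹' (U : Set G) \ (U : Set G)) = 0 := by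
      rw [measure_diff hUsub' hUc.isClosed.measurableSet.nullMeasurableSet μUt, hμeq,
        tsub_self]
    have hopen : IsOpen (⇑α ⁻¹' (U : Set G) \ (U : Set G)) :=
      (hUo.preimage hα).sdiff hUc.isClosed
    have hempty : ⇑α ⁻¹' (U : Set G) \ (U : Set G) = ∅ :=
      (hopen.measure_eq_zero_iff μ).mp hdiff
    have hpre : ⇑α ⁻¹' (U : Set G) = (U : Set G) :=
      Set.Subset.antisymm (Set.diff_eq_empty.mp hempty) hUsub'
    refine ⟨U, hUc, hUo, ?_⟩
    ext x
    rw [Subgroup.mem_map]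
    constructor
    · rintro ⟨y, hy, rfl⟩
      exact hUsub' hy
    · intro hx
      refine ⟨α.symm x, ?_, α.apply_symm_apply x⟩
      have : α.symm x ∈ ⇑α ⁻¹' (U : Set G) := by
        simp only [Set.mem_preimage, α.apply_symm_apply]; exact hx
      rw [hpre] at this; exact this
  · rintro ⟨U, hUc, hUo, hU⟩
    have hU' : U.map α.symm.toMonoidHom = U := by
      have := congrArg (Subgroup.map α.symm.toMonoidHom) hU
      rw [Subgroup.map_map, show α.symm.toMonoidHom.comp α.toMonoidHom = MonoidHom.id G by
        ext x; simp, Subgroup.map_id] at this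
      exact this.symm
    exact ⟨autScale_eq_one_of α hα U hUc hUo hU,
      autScale_eq_one_of α.symm hα' U hUc hUo hU'⟩
end

section
/- Let G be a t.d.l.c. group acting vertex transitively on a connected locally finite δ-hyperbolic graph Γ with compact open vertex stabilisers, and let g, h ∈ G be hyperbolic isometries of Γ with ω₊(g) ≠ ω₊(h). Then for each vertex v there exists K ∈ ℕ such that for all n, m ∈ ℕ, the orbit of v under the pointwise stabiliser of the pair {gⁿ(v), hᵐ(v)} has size at most K. -/
/-- The Gromov product on a graph, with respect to the graph metric. -/
noncomputable def gGP {V : Type*} (Γ : SimpleGraph V) (p x y : V) : ℝ :=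
  ((Γ.dist p x : ℝ) + (Γ.dist p y : ℝ) - (Γ.dist x y : ℝ)) / 2

/-- `Γ` is `δ`-hyperbolic: the four-point Gromov product condition holds. -/
def GraphHyp {V : Type*} (Γ : SimpleGraph V) (δ : ℝ) : Prop :=
  ∀ p x y z : V, min (gGP Γ p x z) (gGP Γ p y z) - δ ≤ gGP Γ p x y

/-- The sequence `u` of vertices converges at infinity (to a point of the Gromov
boundary `∂Γ`). -/
def gConvAtInf {V : Type*} (Γ : SimpleGraph V) (p : V) (u : ℕ → V) : Prop :=
  ∀ M : ℝ, ∃ N : ℕ, ∀ i j : ℕ, N ≤ i → N ≤ j → M ≤ gGP Γ p (u i) (u j)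

/-- The sequences `u` and `v` of vertices converge to the same boundary point of `∂Γ`. -/
def gEquivAtInf {V : Type*} (Γ : SimpleGraph V) (p : V) (u v : ℕ → V) : Prop :=
  ∀ M : ℝ, ∃ N : ℕ, ∀ i j : ℕ, N ≤ i → N ≤ j → M ≤ gGP Γ p (u i) (v j)

/-- The scale function on a t.d.l.c. group:
`s(g) = min{[gUg⁻¹ : gUg⁻¹ ∩ U] : U compact open subgroup}`. -/
noncomputable def scale {G : Type*} [Group G] [TopologicalSpace G] (g : G) : ℕ :=
  sInf {n : ℕ | ∃ U : Subgroup G, IsCompact (U : Set G) ∧ IsOpen (U : Set G) ∧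
    n = U.relIndex (U.map (MulAut.conj g).toMonoidHom)}

section Aux

variable {V : Type*} {Γ : SimpleGraph V}

lemma gGP_comm (p x y : V) : gGP Γ p x y = gGP Γ p y x := by
  unfold gGP; rw [SimpleGraph.dist_comm (u := x)]; ring

lemma gGP_le_left (hconn : Γ.Connected) (p x y : V) : gGP Γ p x y ≤ (Γ.dist p x : ℝ) := by
  have := hconn.dist_triangle (u := p) (v := x) (w := y)
  unfold gGP
  have h2 : (Γ.dist p y : ℝ) ≤ (Γ.dist p x : ℝ) + (Γ.dist x y : ℝ) := by exact_mod_cast this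
  linarith

lemma gGP_le_right (hconn : Γ.Connected) (p x y : V) : gGP Γ p x y ≤ (Γ.dist p y : ℝ) := by
  rw [gGP_comm]; exact gGP_le_left hconn p y x

variable {G : Type*} [Group G] [MulAction G V]

lemma gdist_smul_le (hconn : Γ.Connected)
    (hact : ∀ (g : G) (u w : V), Γ.Adj u w → Γ.Adj (g • u) (g • w))
    (a : G) (x y : V) : Γ.dist (a • x) (a • y) ≤ Γ.dist x y := by
  obtain ⟨p, hp⟩ := hconn.exists_walk_length_eq_dist x y
  let f : Γ →g Γ := ⟨fun w => a • w, fun hadj => hact a _ _ hadj⟩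
  have key := SimpleGraph.dist_le (p.map f)
  rw [SimpleGraph.Walk.length_map, hp] at key
  exact key

lemma gdist_smul (hconn : Γ.Connected)
    (hact : ∀ (g : G) (u w : V), Γ.Adj u w → Γ.Adj (g • u) (g • w))
    (a : G) (x y : V) : Γ.dist (a • x) (a • y) = Γ.dist x y := by
  refine le_antisymm (gdist_smul_le hconn hact a x y) ?_
  have := gdist_smul_le hconn hact a⁻¹ (a • x) (a • y)
  simpa using this

lemma ball_finite (hconn : Γ.Connected) (hlf : ∀ v : V, (Γ.neighborSet v).Finite)
    (v : V) : ∀ R : ℕ, {w : V | Γ.dist v w ≤ R}.Finite := by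
  intro R
  induction R with
  | zero =>
    refine (Set.finite_singleton v).subset ?_
    intro w hw
    simp only [Set.mem_setOf_eq, Nat.le_zero] at hw
    simp [(hconn.dist_eq_zero_iff.mp hw).symm]
  | succ R ih =>
    refine Set.Finite.subset (ih.union (ih.biUnion (fun u _ => hlf u))) ?_
    intro w hw
    simp only [Set.mem_setOf_eq] at hw
    rcases Nat.lt_or_ge (Γ.dist v w) (R + 1) with hlt | hge
    · exact Or.inl (Nat.lt_succ_iff.mp hlt)
    · have hd : Γ.dist v w = R + 1 := le_antisymm hw hge
      obtain ⟨p, hp⟩ := (hconn v w).exists_walk_length_eq_dist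
      have hq : ¬ p.reverse.Nil := by
        rw [SimpleGraph.Walk.nil_iff_length_eq, SimpleGraph.Walk.length_reverse, hp, hd]
        simp
      obtain ⟨u, hadj, q, heq⟩ := SimpleGraph.Walk.not_nil_iff.mp hq
      have hdu : Γ.dist v u ≤ R := by
        have := SimpleGraph.dist_le q
        have hlq : q.length = R := by
          have := congrArg SimpleGraph.Walk.length heq
          rw [SimpleGraph.Walk.length_reverse, hp, hd] at this
          simpa using this.symm
        rw [SimpleGraph.dist_comm]
        omega
      exact Or.inr (Set.mem_biUnion hdu hadj.symm)

end Aux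

/-- For `G` t.d.l.c. acting vertex transitively with compact open stabilisers on a connected
locally finite `δ`-hyperbolic graph, and `g, h ∈ G` hyperbolic with `ω₊(g) ≠ ω₊(h)`: for
each vertex `v` there is `K` bounding, for all `n, m`, the size of the orbit of `v` under
the pointwise stabiliser of `{gⁿ(v), hᵐ(v)}`. -/
theorem bounded_orbit_of_distinct_attracting_points
    {V G : Type*} (Γ : SimpleGraph V)
    [Group G] [TopologicalSpace G] [IsTopologicalGroup G] [T2Space G]
    [LocallyCompactSpace G] [TotallyDisconnectedSpace G] [MulAction G V]
    (δ : ℝ) (hδ : 0 ≤ δ)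
    (hconn : Γ.Connected) (hlf : ∀ v : V, (Γ.neighborSet v).Finite) (hhyp : GraphHyp Γ δ)
    (hact : ∀ (g : G) (u w : V), Γ.Adj u w → Γ.Adj (g • u) (g • w))
    (htrans : ∀ u w : V, ∃ g : G, g • u = w)
    (hstab : ∀ v : V, IsCompact ((MulAction.stabilizer G v : Subgroup G) : Set G) ∧
      IsOpen ((MulAction.stabilizer G v : Subgroup G) : Set G))
    (g h : G)
    (hg : ∀ w : V, gConvAtInf Γ w (fun n => g ^ n • w) ∧
      gConvAtInf Γ w (fun n => (g ^ n)⁻¹ • w) ∧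
      ¬ gEquivAtInf Γ w (fun n => g ^ n • w) (fun n => (g ^ n)⁻¹ • w))
    (hh : ∀ w : V, gConvAtInf Γ w (fun n => h ^ n • w) ∧
      gConvAtInf Γ w (fun n => (h ^ n)⁻¹ • w) ∧
      ¬ gEquivAtInf Γ w (fun n => h ^ n • w) (fun n => (h ^ n)⁻¹ • w))
    (hne : ∀ w : V, ¬ gEquivAtInf Γ w (fun n => g ^ n • w) (fun n => h ^ n • w)) :
    ∀ v : V, ∃ K : ℕ, ∀ n m : ℕ,
      {w : V | ∃ a : G, a ∈ MulAction.stabilizer G (g ^ n • v) ⊓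
          MulAction.stabilizer G (h ^ m • v) ∧ a • v = w}.Finite ∧
      {w : V | ∃ a : G, a ∈ MulAction.stabilizer G (g ^ n • v) ⊓
          MulAction.stabilizer G (h ^ m • v) ∧ a • v = w}.ncard ≤ K := by
  intro v
  classical
  have hne' := hne v
  rw [gEquivAtInf] at hne'
  push_neg at hne'
  obtain ⟨M₀, hM₀⟩ := hne'
  obtain ⟨N₁, hN₁⟩ := (hg v).1 (M₀ + 2 * δ)
  obtain ⟨N₂, hN₂⟩ := (hh v).1 (M₀ + 2 * δ)
  set N := max N₁ N₂ with hN
  -- Claim A: for n, m ≥ N the Gromov product is at most M₀ + 2δ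
  have claimA : ∀ n m : ℕ, N ≤ n → N ≤ m →
      gGP Γ v (g ^ n • v) (h ^ m • v) ≤ M₀ + 2 * δ := by
    intro n m hn hm
    by_contra hgt
    push_neg at hgt
    obtain ⟨i, j, hi, hj, hij⟩ := hM₀ N
    have h1 : M₀ + 2 * δ ≤ gGP Γ v (g ^ i • v) (g ^ n • v) :=
      hN₁ i n (le_trans (le_max_left _ _) hi) (le_trans (le_max_left _ _) hn)
    have h2 : M₀ + 2 * δ ≤ gGP Γ v (h ^ j • v) (h ^ m • v) :=
      hN₂ j m (le_trans (le_max_right _ _) hj) (le_trans (le_max_right _ _) hm)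
    have h3 := hhyp v (h ^ j • v) (g ^ n • v) (h ^ m • v)
    have h3' : M₀ + δ ≤ gGP Γ v (h ^ j • v) (g ^ n • v) := by
      have hmin : M₀ + 2 * δ ≤ min (gGP Γ v (h ^ j • v) (h ^ m • v))
          (gGP Γ v (g ^ n • v) (h ^ m • v)) := le_min h2 (le_of_lt hgt)
      linarith
    have h4 := hhyp v (g ^ i • v) (h ^ j • v) (g ^ n • v)
    have hmin2 : M₀ + δ ≤ min (gGP Γ v (g ^ i • v) (g ^ n • v))
        (gGP Γ v (h ^ j • v) (g ^ n • v)) := le_min (by linarith) h3'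
    linarith
  -- uniform bound on Gromov products
  set C₂ : ℕ := Finset.sup (Finset.range N) (fun n => Γ.dist v (g ^ n • v)) with hC₂
  set C₃ : ℕ := Finset.sup (Finset.range N) (fun m => Γ.dist v (h ^ m • v)) with hC₃
  set C : ℝ := max (M₀ + 2 * δ) (max (C₂ : ℝ) (C₃ : ℝ)) with hC
  have claimB : ∀ n m : ℕ, gGP Γ v (g ^ n • v) (h ^ m • v) ≤ C := by
    intro n m
    rcases Nat.lt_or_ge n N with hn | hn
    · have hle : Γ.dist v (g ^ n • v) ≤ C₂ :=
        hC₂ ▸ Finset.le_sup (f := fun k => Γ.dist v (g ^ k • v)) (Finset.mem_range.mpr hn)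
      have := gGP_le_left hconn v (g ^ n • v) (h ^ m • v)
      have hle' : (Γ.dist v (g ^ n • v) : ℝ) ≤ (C₂ : ℝ) := by exact_mod_cast hle
      calc gGP Γ v (g ^ n • v) (h ^ m • v) ≤ (Γ.dist v (g ^ n • v) : ℝ) := this
        _ ≤ (C₂ : ℝ) := hle'
        _ ≤ C := le_trans (le_max_left _ _) (le_max_right _ _)
    · rcases Nat.lt_or_ge m N with hm | hm
      · have hle : Γ.dist v (h ^ m • v) ≤ C₃ :=
          hC₃ ▸ Finset.le_sup (f := fun k => Γ.dist v (h ^ k • v)) (Finset.mem_range.mpr hm)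
        have := gGP_le_right hconn v (g ^ n • v) (h ^ m • v)
        have hle' : (Γ.dist v (h ^ m • v) : ℝ) ≤ (C₃ : ℝ) := by exact_mod_cast hle
        calc gGP Γ v (g ^ n • v) (h ^ m • v) ≤ (Γ.dist v (h ^ m • v) : ℝ) := this
          _ ≤ (C₃ : ℝ) := hle'
          _ ≤ C := le_trans (le_max_right _ _) (le_max_right _ _)
      · exact le_trans (claimA n m hn hm) (le_max_left _ _)
  set R : ℕ := ⌈2 * C + 2 * δ⌉₊ with hR
  have hBall : {w : V | Γ.dist v w ≤ R}.Finite := ball_finite hconn hlf v R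
  refine ⟨{w : V | Γ.dist v w ≤ R}.ncard, ?_⟩
  intro n m
  have hsub : {w : V | ∃ a : G, a ∈ MulAction.stabilizer G (g ^ n • v) ⊓
      MulAction.stabilizer G (h ^ m • v) ∧ a • v = w} ⊆ {w : V | Γ.dist v w ≤ R} := by
    rintro w ⟨a, ha, rfl⟩
    rw [Subgroup.mem_inf] at ha
    have hax : a • (g ^ n • v) = g ^ n • v := ha.1
    have hay : a • (h ^ m • v) = h ^ m • v := ha.2
    -- Gromov products of a • v with the fixed points equal dist v (a • v) / 2
    have e1 : gGP Γ v (g ^ n • v) (a • v) = (Γ.dist v (a • v) : ℝ) / 2 := by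
      have hd : Γ.dist (g ^ n • v) (a • v) = Γ.dist v (g ^ n • v) := by
        conv_lhs => rw [← hax]
        rw [gdist_smul hconn hact, SimpleGraph.dist_comm]
      unfold gGP
      rw [hd]
      ring
    have e2 : gGP Γ v (h ^ m • v) (a • v) = (Γ.dist v (a • v) : ℝ) / 2 := by
      have hd : Γ.dist (h ^ m • v) (a • v) = Γ.dist v (h ^ m • v) := by
        conv_lhs => rw [← hay]
        rw [gdist_smul hconn hact, SimpleGraph.dist_comm]
      unfold gGP
      rw [hd]
      ring
    have h5 := hhyp v (g ^ n • v) (h ^ m • v) (a • v)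
    rw [e1, e2, min_self] at h5
    have h6 := claimB n m
    have h7 : (Γ.dist v (a • v) : ℝ) ≤ 2 * C + 2 * δ := by linarith
    have h8 : (Γ.dist v (a • v) : ℝ) ≤ (R : ℝ) := le_trans h7 (Nat.le_ceil _)
    exact Set.mem_setOf_eq ▸ (by exact_mod_cast h8)
  have hfin := hBall.subset hsub
  exact ⟨hfin, Set.ncard_le_ncard hsub hBall⟩
end

section
/- Let g be a hyperbolic automorphism of a connected locally finite δ-hyperbolic graph Γ. Then there exists a bi-infinite geodesic γ in Γ and n ∈ ℕ such that gⁿ acts as a translation along γ (i.e., gⁿ maps γ to itself, shifting it by a fixed positive amount). -/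
namespace AxisAux

open SimpleGraph

variable {V : Type*} {Γ : SimpleGraph V}


/-- An adjacency-preserving equivalence preserves graph distance. -/
lemma dist_equiv (hconn : Γ.Connected) (g : V ≃ V)
    (hadj : ∀ u w : V, Γ.Adj u w ↔ Γ.Adj (g u) (g w)) (u v : V) :
    Γ.dist (g u) (g v) = Γ.dist u v := by
  have hhom : ∀ (e : V ≃ V), (∀ u w : V, Γ.Adj u w → Γ.Adj (e u) (e w)) →
      ∀ u v : V, Γ.dist (e u) (e v) ≤ Γ.dist u v := by
    intro e he u v
    obtain ⟨w, hw⟩ := hconn.exists_walk_length_eq_dist u v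
    have := Γ.dist_le (w.map ⟨e, fun h => he _ _ h⟩)
    simpa [hw] using this
  have h1 : Γ.dist (g u) (g v) ≤ Γ.dist u v := hhom g (fun u w h => (hadj u w).1 h) u v
  have h2 : Γ.dist u v ≤ Γ.dist (g u) (g v) := by
    have := hhom g.symm (fun u w h => by
      have := (hadj (g.symm u) (g.symm w)).2
      simp only [Equiv.apply_symm_apply] at this
      exact this h) (g u) (g v)
    simpa using this
  omega

lemma dist_iter (hconn : Γ.Connected) (g : V ≃ V)
    (hadj : ∀ u w : V, Γ.Adj u w ↔ Γ.Adj (g u) (g w)) (k : ℕ) (u v : V) :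
    Γ.dist ((⇑g)^[k] u) ((⇑g)^[k] v) = Γ.dist u v := by
  induction k with
  | zero => simp
  | succ n ih =>
      rw [Function.iterate_succ_apply', Function.iterate_succ_apply']
      rw [dist_equiv hconn g hadj]; exact ih

/-- any walk: distance from start to k-th vertex is at most k -/
lemma dist_getVert_le (hconn : Γ.Connected) {u v : V} (w : Γ.Walk u v) (k : ℕ) :
    Γ.dist u (w.getVert k) ≤ k := by
  induction k with
  | zero => simp [SimpleGraph.Walk.getVert_zero]
  | succ n ih =>
      by_cases h : n < w.length
      · have hadj := w.adj_getVert_succ h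
        have h1 : Γ.dist (w.getVert n) (w.getVert (n+1)) = 1 :=
          (SimpleGraph.dist_eq_one_iff_adj).2 hadj
        have := hconn.dist_triangle (u := u) (v := w.getVert n) (w := w.getVert (n+1))
        omega
      · push_neg at h
        rw [w.getVert_of_length_le (by omega)]
        rw [w.getVert_of_length_le h] at ih
        omega

/-- points on a shortest walk split the distance exactly -/
lemma shortest_walk_split (hconn : Γ.Connected) {u v : V} (w : Γ.Walk u v)
    (hw : w.length = Γ.dist u v) (k : ℕ) (hk : k ≤ w.length) :
    Γ.dist u (w.getVert k) = k ∧ Γ.dist (w.getVert k) v = w.length - k := by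
  have h1 : Γ.dist u (w.getVert k) ≤ k := dist_getVert_le hconn w k
  have h2 : Γ.dist (w.getVert k) v ≤ w.length - k := by
    have := dist_getVert_le hconn w.reverse (w.length - k)
    rw [SimpleGraph.Walk.getVert_reverse] at this
    have hh : w.length - (w.length - k) = k := by omega
    rw [hh] at this
    rw [SimpleGraph.dist_comm]
    simpa [SimpleGraph.Walk.length_reverse] using this
  have h3 := hconn.dist_triangle (u := u) (v := w.getVert k) (w := v)
  omega

/-- balls in a connected locally finite graph are finite -/
lemma ball_finite (hconn : Γ.Connected) (hlf : ∀ v : V, (Γ.neighborSet v).Finite)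
    (p : V) (R : ℕ) : {v : V | Γ.dist p v ≤ R}.Finite := by
  induction R with
  | zero =>
      apply Set.Finite.subset (Set.finite_singleton p)
      intro v hv
      simp only [Set.mem_setOf_eq, Nat.le_zero] at hv
      have := (hconn.dist_eq_zero_iff (u := p) (v := v)).1 hv
      simp [this.symm]
  | succ R ih =>
      have hsub : {v : V | Γ.dist p v ≤ R + 1} ⊆
          {v : V | Γ.dist p v ≤ R} ∪ ⋃ u ∈ {v : V | Γ.dist p v ≤ R}, Γ.neighborSet u := by
        intro v hv
        simp only [Set.mem_setOf_eq] at hv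
        by_cases h : Γ.dist p v ≤ R
        · exact Or.inl h
        · have hd : Γ.dist p v = R + 1 := by omega
          obtain ⟨w, hw⟩ := hconn.exists_walk_length_eq_dist p v
          right
          refine Set.mem_biUnion (x := w.getVert R) ?_ ?_
          · exact (shortest_walk_split hconn w hw R (by omega)).1.le
          · have : Γ.Adj (w.getVert R) (w.getVert (R+1)) :=
              w.adj_getVert_succ (by omega)
            have hv' : w.getVert (R+1) = v := by
              have := w.getVert_of_length_le (i := R+1) (by omega)
              exact this
            rw [hv'] at this
            exact this
      exact Set.Finite.subset (ih.union (Set.Finite.biUnion ih (fun u _ => hlf u))) hsub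



lemma gGP_comm (p x y : V) : gGP Γ p x y = gGP Γ p y x := by
  simp only [gGP, SimpleGraph.dist_comm (u := x) (v := y)]
  ring

lemma gGP_self (p x : V) : gGP Γ p x x = Γ.dist p x := by
  simp only [gGP, SimpleGraph.dist_self]
  push_cast
  ring

lemma gGP_le_dist_left (hconn : Γ.Connected) (p x y : V) : gGP Γ p x y ≤ Γ.dist p x := by
  have := hconn.dist_triangle (u := p) (v := x) (w := y)
  have h2 : (Γ.dist p y : ℝ) ≤ (Γ.dist p x : ℝ) + (Γ.dist x y : ℝ) := by exact_mod_cast this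
  simp only [gGP]
  linarith

lemma gGP_le_dist_right (hconn : Γ.Connected) (p x y : V) : gGP Γ p x y ≤ Γ.dist p y := by
  rw [gGP_comm]; exact gGP_le_dist_left hconn p y x

lemma gGP_ge_sub (hconn : Γ.Connected) (p x y : V) :
    (Γ.dist p x : ℝ) - Γ.dist x y ≤ gGP Γ p x y := by
  have := hconn.dist_triangle (u := p) (v := y) (w := x)
  have h2 : (Γ.dist p x : ℝ) ≤ (Γ.dist p y : ℝ) + (Γ.dist x y : ℝ) := by
    rw [SimpleGraph.dist_comm (u := y) (v := x)] at this; exact_mod_cast this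
  simp only [gGP]; linarith

lemma gGP_nonneg (hconn : Γ.Connected) (p x y : V) : 0 ≤ gGP Γ p x y := by
  have := hconn.dist_triangle (u := x) (v := p) (w := y)
  have h2 : (Γ.dist x y : ℝ) ≤ (Γ.dist x p : ℝ) + (Γ.dist p y : ℝ) := by exact_mod_cast this
  simp only [gGP]
  rw [SimpleGraph.dist_comm (u := x) (v := p)] at h2
  linarith

lemma gGP_equiv (g : V ≃ V)
    (hd : ∀ u v : V, Γ.dist (g u) (g v) = Γ.dist u v) (p x y : V) :
    gGP Γ (g p) (g x) (g y) = gGP Γ p x y := by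
  simp [gGP, hd]

lemma balanced_point (hconn : Γ.Connected) {δ : ℝ} (hδ : 0 ≤ δ) (hhyp : GraphHyp Γ δ)
    (x Y w : V) :
    ∃ z : V, (Γ.dist x z + Γ.dist z Y = Γ.dist x Y) ∧
      ((Γ.dist w z : ℝ) ≤ gGP Γ w x Y + 2*δ + 2) := by
  classical
  obtain ⟨W, hW⟩ := hconn.exists_walk_length_eq_dist x Y
  set ℓ := W.length with hℓ
  set zz : ℕ → V := fun r => W.getVert r with hzz
  set f : ℕ → ℝ := fun r => gGP Γ w x (zz r) - gGP Γ w (zz r) Y with hf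
  have hsplit : ∀ r, r ≤ ℓ → Γ.dist x (zz r) = r ∧ Γ.dist (zz r) Y = ℓ - r := by
    intro r hr
    exact shortest_walk_split hconn W hW r hr
  have hf0 : 0 ≤ f 0 := by
    have h0 : zz 0 = x := W.getVert_zero
    simp only [hf, h0]
    rw [gGP_self]
    have := gGP_le_dist_left hconn w x Y
    linarith
  set P : ℕ → Prop := fun r => 0 ≤ f r with hP
  set r₀ := Nat.findGreatest P ℓ with hr₀
  have hPr₀ : P r₀ := Nat.findGreatest_spec (Nat.zero_le ℓ) hf0
  have hr₀le : r₀ ≤ ℓ := Nat.findGreatest_le ℓ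
  have hstep : ∀ r, r < ℓ → f (r+1) - f r ≥ -2 := by
    intro r hr
    have hadj : Γ.Adj (zz r) (zz (r+1)) := W.adj_getVert_succ hr
    have hd1 : (Γ.dist (zz r) (zz (r+1)) : ℝ) = 1 := by
      exact_mod_cast congrArg (Nat.cast : ℕ → ℝ) ((SimpleGraph.dist_eq_one_iff_adj).2 hadj)
    have trig3 := hconn.dist_triangle (u := zz r) (v := zz (r+1)) (w := Y)
    have c3 : (Γ.dist (zz r) Y : ℝ) ≤ (Γ.dist (zz (r+1)) Y : ℝ) + 1 := by
      have : (Γ.dist (zz r) Y : ℝ) ≤ (Γ.dist (zz r) (zz (r+1)) : ℝ) + (Γ.dist (zz (r+1)) Y : ℝ) := by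
        exact_mod_cast trig3
      linarith
    have hx1 : (Γ.dist x (zz r) : ℝ) = r := by exact_mod_cast (hsplit r (by omega)).1
    have hx2 : (Γ.dist x (zz (r+1)) : ℝ) = r + 1 := by exact_mod_cast (hsplit (r+1) (by omega)).1
    simp only [hf, gGP]
    rw [hx1, hx2]
    linarith
  have hfr₀ : f r₀ < 2 := by
    by_cases h : r₀ = ℓ
    · have hzℓ : zz ℓ = Y := W.getVert_length
      have hle : f ℓ ≤ 0 := by
        simp only [hf, hzℓ]
        rw [gGP_self]
        have := gGP_le_dist_right hconn w x Y
        linarith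
      rw [h]; linarith
    · have hlt : r₀ < ℓ := lt_of_le_of_ne hr₀le h
      have hnot : ¬ P (r₀ + 1) := by
        apply Nat.findGreatest_is_greatest (n := ℓ) <;> omega
      simp only [hP, not_le] at hnot
      have := hstep r₀ hlt
      linarith
  refine ⟨zz r₀, ?_, ?_⟩
  · have h := hsplit r₀ hr₀le
    omega
  · have h4pt := hhyp w x Y (zz r₀)
    have hfge : gGP Γ w (zz r₀) Y ≤ gGP Γ w x (zz r₀) := by
      have : (0:ℝ) ≤ f r₀ := hPr₀
      simp only [hf] at this; linarith
    have hmin : min (gGP Γ w x (zz r₀)) (gGP Γ w Y (zz r₀)) = gGP Γ w Y (zz r₀) := by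
      rw [min_eq_right]
      rw [gGP_comm (x := Y)]
      exact hfge
    have hYz : gGP Γ w (zz r₀) Y ≤ gGP Γ w x Y + δ := by
      rw [hmin] at h4pt
      rw [gGP_comm (x := Y)] at h4pt
      linarith
    have hsum : gGP Γ w x (zz r₀) + gGP Γ w (zz r₀) Y
        = (Γ.dist w (zz r₀) : ℝ) + gGP Γ w x Y := by
      have hsp := hsplit r₀ hr₀le
      have h1 : (Γ.dist x (zz r₀) : ℝ) + (Γ.dist (zz r₀) Y : ℝ) = (Γ.dist x Y : ℝ) := by
        have : Γ.dist x (zz r₀) + Γ.dist (zz r₀) Y = Γ.dist x Y := by omega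
        exact_mod_cast this
      simp only [gGP]
      linarith
    have hfr : f r₀ < 2 := hfr₀
    simp only [hf] at hfr
    have hdz : (Γ.dist w (zz r₀) : ℝ)
        = gGP Γ w x (zz r₀) + gGP Γ w (zz r₀) Y - gGP Γ w x Y := by
      linarith
    rw [hdz]
    linarith



/-- weight of a chain `c 0, c 1, ..., c l` -/
def chainWt (w : V → V → ℕ) (c : ℕ → V) (l : ℕ) : ℕ :=
  ∑ r ∈ Finset.range l, w (c r) (c (r+1))

lemma chainWt_le (w : V → V → ℕ) (c : ℕ → V) (l : ℕ) {B : Set V} (hB : B.Finite)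
    (hc : ∀ r ≤ l, c r ∈ B) :
    chainWt w c l ≤ l * ((hB.toFinset ×ˢ hB.toFinset).sup fun q => w q.1 q.2) := by
  classical
  unfold chainWt
  calc ∑ r ∈ Finset.range l, w (c r) (c (r+1))
      ≤ ∑ _r ∈ Finset.range l, ((hB.toFinset ×ˢ hB.toFinset).sup fun q => w q.1 q.2) := by
        apply Finset.sum_le_sum
        intro r hr
        simp only [Finset.mem_range] at hr
        have h1 : (c r, c (r+1)) ∈ hB.toFinset ×ˢ hB.toFinset := by
          simp only [Finset.mem_product, Set.Finite.mem_toFinset]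
          exact ⟨hc r (by omega), hc (r+1) (by omega)⟩
        exact Finset.le_sup (f := fun q : V × V => w q.1 q.2) h1
    _ = l * _ := by simp [Finset.sum_const, Finset.card_range, Nat.smul_one_eq_cast]
    _ ≤ _ := le_rfl

/-- splitting a closed subcycle out of a chain -/
lemma chain_split (w : V → V → ℕ) (c : ℕ → V) (l i j : ℕ) (hij : i < j) (hjl : j ≤ l)
    (hc : c i = c j) :
    chainWt w c l = chainWt w (fun r => if r < i then c r else c (r + (j - i))) (l - (j - i))
      + chainWt w (fun r => c (i + r)) (j - i) := by
  classical
  set Δ := j - i with hΔ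
  have hj : j = i + Δ := by omega
  -- total sum splits as [0,i) + [i,j) + [j,l)
  have h1 : chainWt w c l
      = (∑ r ∈ Finset.Ico 0 i, w (c r) (c (r+1)))
        + (∑ r ∈ Finset.Ico i j, w (c r) (c (r+1)))
        + (∑ r ∈ Finset.Ico j l, w (c r) (c (r+1))) := by
    unfold chainWt
    rw [Finset.range_eq_Ico]
    rw [← Finset.sum_Ico_consecutive _ (Nat.zero_le j) hjl]
    rw [← Finset.sum_Ico_consecutive _ (Nat.zero_le i) (le_of_lt hij)]
  -- middle part is the subcycle
  have h2 : (∑ r ∈ Finset.Ico i j, w (c r) (c (r+1)))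
      = chainWt w (fun r => c (i + r)) Δ := by
    rw [Finset.sum_Ico_eq_sum_range]
    unfold chainWt
    apply Finset.sum_congr rfl
    intro r _
    have : i + r + 1 = i + (r + 1) := by omega
    rw [this]
  -- outer part
  have h3 : chainWt w (fun r => if r < i then c r else c (r + Δ)) (l - Δ)
      = (∑ r ∈ Finset.Ico 0 i, w (c r) (c (r+1)))
        + (∑ r ∈ Finset.Ico j l, w (c r) (c (r+1))) := by
    unfold chainWt
    have hi_le : i ≤ l - Δ := by omega
    rw [Finset.range_eq_Ico]
    rw [← Finset.sum_Ico_consecutive _ (Nat.zero_le i) hi_le]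
    congr 1
    · apply Finset.sum_congr rfl
      intro r hr
      simp only [Finset.mem_Ico] at hr
      have hr1 : r < i := hr.2
      simp only [if_pos hr1]
      by_cases h : r + 1 < i
      · simp only [if_pos h]
      · have : r + 1 = i := by omega
        simp only [if_neg h, this]
        rw [← hj, ← hc]
        simp
    · rw [Finset.sum_Ico_eq_sum_range, Finset.sum_Ico_eq_sum_range]
      have hlen : l - Δ - i = l - j := by omega
      rw [hlen]
      apply Finset.sum_congr rfl
      intro r _
      have e1 : ¬ (i + r < i) := by omega
      have e2 : ¬ (i + r + 1 < i) := by omega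
      simp only [if_neg e1, if_neg e2]
      have e3 : i + r + Δ = j + r := by omega
      have e4 : i + r + 1 + Δ = j + r + 1 := by omega
      rw [e3, e4]
  omega

/-- existence of a "minimum mean cycle" in a finite weighted digraph, with the
universal lower bound for all closed chains -/
lemma exists_min_cycle (B : Set V) (hB : B.Finite) (hBne : B.Nonempty) (w : V → V → ℕ) :
    ∃ (L₀ W₀ : ℕ) (c₀ : ℕ → V), 0 < L₀ ∧
      (c₀ 0 = c₀ L₀ ∧ (∀ r ≤ L₀, c₀ r ∈ B) ∧ chainWt w c₀ L₀ = W₀) ∧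
      (∀ (l : ℕ) (c : ℕ → V), c 0 = c l → (∀ r ≤ l, c r ∈ B) →
        W₀ * l ≤ chainWt w c l * L₀) := by
  classical
  set N := hB.toFinset.card with hN
  set Wmax := ((hB.toFinset ×ˢ hB.toFinset).sup fun q => w q.1 q.2) with hWmax
  have hN1 : 1 ≤ N := by
    rw [hN]
    have := hBne
    obtain ⟨x, hx⟩ := this
    have : x ∈ hB.toFinset := by simpa [Set.Finite.mem_toFinset] using hx
    exact Finset.card_pos.2 ⟨x, this⟩
  set S : Set (ℕ × ℕ) := {q | 0 < q.1 ∧ q.1 ≤ N ∧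
    ∃ c : ℕ → V, c 0 = c q.1 ∧ (∀ r ≤ q.1, c r ∈ B) ∧ chainWt w c q.1 = q.2} with hS
  have hSfin : S.Finite := by
    apply Set.Finite.subset (Set.finite_Icc ((0,0) : ℕ × ℕ) ((N, N * Wmax) : ℕ × ℕ))
    rintro ⟨l, wt⟩ ⟨hl0, hlN, c, hcc, hcB, hcw⟩
    simp only [Set.mem_Icc, Prod.mk_le_mk]
    have hlN' : l ≤ N := hlN
    refine ⟨⟨Nat.zero_le _, Nat.zero_le _⟩, hlN', ?_⟩
    have hcw' : chainWt w c l = wt := hcw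
    have hcB' : ∀ r ≤ l, c r ∈ B := hcB
    rw [← hcw']
    calc chainWt w c l ≤ l * Wmax := chainWt_le w c l hB hcB'
      _ ≤ N * Wmax := Nat.mul_le_mul_right _ hlN'
  have hSne : S.Nonempty := by
    obtain ⟨x, hx⟩ := hBne
    refine ⟨(1, w x x), ?_⟩
    simp only [hS, Set.mem_setOf_eq]
    exact ⟨Nat.one_pos, hN1, fun _ => x, rfl, fun _ _ => hx, by simp [chainWt]⟩
  obtain ⟨⟨L₀, W₀⟩, hmem, hminim⟩ :=
    Set.exists_min_image S (fun q => (q.2 : ℚ) / (q.1 : ℚ)) hSfin hSne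
  have hL₀pos : 0 < L₀ := hmem.1
  have hL₀N : L₀ ≤ N := hmem.2.1
  obtain ⟨c₀, hc₀c, hc₀B, hc₀w⟩ := hmem.2.2
  -- key cross-multiplied minimality
  have hkey : ∀ l wt : ℕ, (l, wt) ∈ S → W₀ * l ≤ wt * L₀ := by
    intro l wt hlw
    have h : (W₀:ℚ) / (L₀:ℚ) ≤ (wt:ℚ) / (l:ℚ) := hminim (l, wt) hlw
    have hlpos : 0 < l := hlw.1
    have hl0 : (0:ℚ) < (l:ℚ) := by exact_mod_cast hlpos
    have hL0 : (0:ℚ) < (L₀:ℚ) := by exact_mod_cast hL₀pos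
    rw [div_le_div_iff₀ hL0 hl0] at h
    exact_mod_cast h
  refine ⟨L₀, W₀, c₀, hL₀pos, ⟨hc₀c, hc₀B, hc₀w⟩, ?_⟩
  -- strong induction on l
  intro l
  induction l using Nat.strong_induction_on with
  | _ l ih =>
    intro c hcc hcB
    rcases Nat.eq_zero_or_pos l with hl0 | hl0
    · subst hl0; simp [chainWt]
    by_cases hlN : l ≤ N
    · exact hkey l (chainWt w c l) ⟨hl0, hlN, c, hcc, hcB, rfl⟩
    · -- pigeonhole among c 0, ..., c N
      push_neg at hlN
      have hmap : ∀ r ∈ Finset.range (N+1), c r ∈ hB.toFinset := by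
        intro r hr
        simp only [Finset.mem_range] at hr
        simp only [Set.Finite.mem_toFinset]
        exact hcB r (by omega)
      have hcard : hB.toFinset.card < (Finset.range (N+1)).card := by
        simp [Finset.card_range, hN]
      obtain ⟨i, hi, j, hj, hne, heq⟩ :=
        Finset.exists_ne_map_eq_of_card_lt_of_maps_to hcard hmap
      simp only [Finset.mem_range] at hi hj
      -- order i < j
      wlog hij : i < j generalizing i j
      · exact this j i (Ne.symm hne) heq.symm hj hi (by omega)
      have hjl : j ≤ l := by omega
      have hsplit := chain_split w c l i j hij hjl heq
      set Δ := j - i with hΔ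
      set c₂ : ℕ → V := fun r => if r < i then c r else c (r + Δ) with hc₂
      have hinner : W₀ * Δ ≤ chainWt w (fun r => c (i + r)) Δ * L₀ := by
        apply hkey
        refine ⟨by omega, by omega, fun r => c (i + r), ?_, ?_, rfl⟩
        · simp only []
          rw [Nat.add_zero]
          have : i + Δ = j := by omega
          rw [this]; exact heq
        · intro r hr
          exact hcB (i + r) (by omega)
      have houter : W₀ * (l - Δ) ≤ chainWt w c₂ (l - Δ) * L₀ := by
        apply ih (l - Δ) (by omega)
        · simp only [hc₂]
          rcases Nat.eq_zero_or_pos i with h0 | h0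
          · subst h0
            simp only [if_neg (by omega : ¬ (0:ℕ) < 0)]
            by_cases h : l - Δ < 0
            · omega
            · simp only [if_neg h]
              have h1 : (0:ℕ) + Δ = j := by omega
              have h2 : l - Δ + Δ = l := by omega
              rw [h1, h2, ← heq, ← hcc]
          · have h1 : (0:ℕ) < i := h0
            simp only [if_pos h1]
            have h2 : ¬ (l - Δ < i) := by omega
            simp only [if_neg h2]
            have h3 : l - Δ + Δ = l := by omega
            rw [h3, ← hcc]
        · intro r hr
          simp only [hc₂]
          by_cases h : r < i
          · rw [if_pos h]; exact hcB r (by omega)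
          · rw [if_neg h]; exact hcB (r + Δ) (by omega)
      have : W₀ * l = W₀ * (l - Δ) + W₀ * Δ := by
        have : l - Δ + Δ = l := by omega
        nlinarith [this]
      rw [this, hsplit]
      nlinarith [hinner, houter]


lemma gGP_map (e : V → V)
    (hd : ∀ u v : V, Γ.dist (e u) (e v) = Γ.dist u v) (p x y : V) :
    gGP Γ (e p) (e x) (e y) = gGP Γ p x y := by
  simp [gGP, hd]

lemma dist_getVert_getVert (hconn : Γ.Connected) {u v : V} (w : Γ.Walk u v) (r k : ℕ) :
    Γ.dist (w.getVert r) (w.getVert (r + k)) ≤ k := by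
  induction k with
  | zero => simp
  | succ m ih =>
      by_cases h : r + m < w.length
      · have hadj := w.adj_getVert_succ h
        have h1 : Γ.dist (w.getVert (r+m)) (w.getVert (r+m+1)) = 1 :=
          (SimpleGraph.dist_eq_one_iff_adj).2 hadj
        have := hconn.dist_triangle (u := w.getVert r) (v := w.getVert (r+m))
          (w := w.getVert (r+m+1))
        have e1 : r + (m+1) = r + m + 1 := by omega
        rw [e1]
        omega
      · push_neg at h
        have e1 : w.getVert (r + (m+1)) = v := w.getVert_of_length_le (by omega)
        have e2 : w.getVert (r + m) = v := w.getVert_of_length_le (by omega)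
        rw [e1]
        rw [e2] at ih
        omega

end AxisAux
/-- A hyperbolic automorphism `g` of a connected locally finite `δ`-hyperbolic graph has a
power `gⁿ` acting as a translation along some bi-infinite geodesic `γ`. -/
theorem exists_axis
    {V : Type*} (Γ : SimpleGraph V)
    (δ : ℝ) (hδ : 0 ≤ δ)
    (hconn : Γ.Connected) (hlf : ∀ v : V, (Γ.neighborSet v).Finite) (hhyp : GraphHyp Γ δ)
    (g : V ≃ V) (hadj : ∀ u w : V, Γ.Adj u w ↔ Γ.Adj (g u) (g w))
    (hunbdd : ∀ v : V, ¬ BddAbove (Set.range fun n : ℕ => Γ.dist v ((⇑g)^[n] v)))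
    (hhypg : ∀ v : V,
      gConvAtInf Γ v (fun n => (⇑g)^[n] v) ∧
      gConvAtInf Γ v (fun n => (⇑g.symm)^[n] v) ∧
      ¬ gEquivAtInf Γ v (fun n => (⇑g)^[n] v) (fun n => (⇑g.symm)^[n] v)) :
    ∃ γ : ℤ → V, (∀ i j : ℤ, (Γ.dist (γ i) (γ j) : ℤ) = |i - j|) ∧
      ∃ n : ℕ, 0 < n ∧ ∃ c : ℤ, 0 < c ∧ ∀ i : ℤ, (⇑g)^[n] (γ i) = γ (i + c) := by
  classical
  obtain ⟨p⟩ := hconn.nonempty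
  obtain ⟨hconvF, hconvB, hneq⟩ := hhypg p
  -- isometry facts
  have hadj' : ∀ u w : V, Γ.Adj u w ↔ Γ.Adj (g.symm u) (g.symm w) := by
    intro u w
    constructor
    · intro h
      have h2 := (hadj (g.symm u) (g.symm w)).2
      simp only [Equiv.apply_symm_apply] at h2
      exact h2 h
    · intro h
      have h2 := (hadj (g.symm u) (g.symm w)).1 h
      simpa using h2
  have hdit : ∀ (k : ℕ) (u v : V), Γ.dist ((⇑g)^[k] u) ((⇑g)^[k] v) = Γ.dist u v :=
    fun k => AxisAux.dist_iter hconn g hadj k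
  have hdit' : ∀ (k : ℕ) (u v : V), Γ.dist ((⇑g.symm)^[k] u) ((⇑g.symm)^[k] v) = Γ.dist u v :=
    fun k => AxisAux.dist_iter hconn g.symm hadj' k
  have hLI : ∀ (k : ℕ) (x : V), (⇑g)^[k] ((⇑g.symm)^[k] x) = x :=
    fun k => Function.LeftInverse.iterate g.apply_symm_apply k
  have hLI' : ∀ (k : ℕ) (x : V), (⇑g.symm)^[k] ((⇑g)^[k] x) = x :=
    fun k => Function.LeftInverse.iterate g.symm_apply_apply k
  set a : ℕ → ℕ := fun i => Γ.dist p ((⇑g)^[i] p) with ha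
  -- ===== step (b): uniform Gromov product bound between the two rays =====
  obtain ⟨K, hK0, N₀, hKbd⟩ : ∃ K : ℝ, 0 ≤ K ∧ ∃ N₀ : ℕ, ∀ i j : ℕ, N₀ ≤ i → N₀ ≤ j →
      gGP Γ p ((⇑g)^[i] p) ((⇑g.symm)^[j] p) ≤ K := by
    unfold gEquivAtInf at hneq
    push_neg at hneq
    obtain ⟨M₀, hM₀⟩ := hneq
    obtain ⟨N₁, hN₁⟩ := hconvF (M₀ + 2*δ + 1)
    obtain ⟨N₂, hN₂⟩ := hconvB (M₀ + 2*δ + 1)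
    refine ⟨max (M₀ + 2*δ) 0, le_max_right _ _, max N₁ N₂, ?_⟩
    intro i j hi hj
    obtain ⟨i', j', hi', hj', hlt⟩ := hM₀ (max N₁ N₂)
    have step1 : gGP Γ p ((⇑g)^[i] p) ((⇑g.symm)^[j'] p) < M₀ + δ := by
      by_contra hcon
      push_neg at hcon
      have h4a := hhyp p ((⇑g)^[i'] p) ((⇑g.symm)^[j'] p) ((⇑g)^[i] p)
      have hMuu : M₀ + 2*δ + 1 ≤ gGP Γ p ((⇑g)^[i'] p) ((⇑g)^[i] p) :=
        hN₁ i' i (le_trans (le_max_left _ _) hi') (le_trans (le_max_left _ _) hi)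
      have hminlb : M₀ + δ ≤ min (gGP Γ p ((⇑g)^[i'] p) ((⇑g)^[i] p))
          (gGP Γ p ((⇑g.symm)^[j'] p) ((⇑g)^[i] p)) := by
        apply le_min
        · linarith
        · rw [AxisAux.gGP_comm]
          exact hcon
      linarith
    have step2 : gGP Γ p ((⇑g)^[i] p) ((⇑g.symm)^[j] p) ≤ M₀ + 2*δ := by
      by_contra hcon
      push_neg at hcon
      have h4b := hhyp p ((⇑g)^[i] p) ((⇑g.symm)^[j'] p) ((⇑g.symm)^[j] p)
      have hMvv : M₀ + 2*δ + 1 ≤ gGP Γ p ((⇑g.symm)^[j'] p) ((⇑g.symm)^[j] p) :=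
        hN₂ j' j (le_trans (le_max_right _ _) hj') (le_trans (le_max_right _ _) hj)
      have hminlb : M₀ + 2*δ < min (gGP Γ p ((⇑g)^[i] p) ((⇑g.symm)^[j] p))
          (gGP Γ p ((⇑g.symm)^[j'] p) ((⇑g.symm)^[j] p)) := by
        apply lt_min
        · linarith
        · linarith
      linarith
    exact le_trans step2 (le_max_left _ _)
  -- ===== distance identities =====
  have hva : ∀ j : ℕ, Γ.dist p ((⇑g.symm)^[j] p) = a j := by
    intro j
    rw [← hdit j p ((⇑g.symm)^[j] p), hLI j p, SimpleGraph.dist_comm]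
  have hduv : ∀ i j : ℕ, Γ.dist ((⇑g)^[i] p) ((⇑g.symm)^[j] p) = a (i+j) := by
    intro i j
    rw [← hdit j ((⇑g)^[i] p) ((⇑g.symm)^[j] p), hLI j p, ← Function.iterate_add_apply,
      SimpleGraph.dist_comm]
    simp only [ha]
    rw [Nat.add_comm j i]
  have hsuper : ∀ i j : ℕ, N₀ ≤ i → N₀ ≤ j → (a i : ℝ) + (a j : ℝ) - 2*K ≤ (a (i+j) : ℝ) := by
    intro i j hi hj
    have h1 := hKbd i j hi hj
    have h2 : gGP Γ p ((⇑g)^[i] p) ((⇑g.symm)^[j] p)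
        = ((a i : ℝ) + (a j : ℝ) - (a (i+j) : ℝ)) / 2 := by
      simp only [gGP]
      rw [hva j, hduv i j]
    rw [h2] at h1
    linarith
  -- ===== choice of m₁ =====
  set H₁ : ℝ := K + 4*δ + 2 with hH₁
  set T : ℝ := K + H₁ + 2*δ + 1 with hT
  have hunbp := hunbdd p
  rw [not_bddAbove_iff] at hunbp
  obtain ⟨m₁, hm₁N₀, hm₁big, hm₁2K⟩ : ∃ m₁ : ℕ, N₀ ≤ m₁ ∧ T ≤ (a m₁ : ℝ) ∧
      2*K + 1 ≤ (a m₁ : ℝ) := by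
    set C₀ : ℕ := (Finset.range N₀).sup a with hC₀
    set Cr : ℝ := max T (2*K+1) with hCr
    obtain ⟨y, hy, hylt⟩ := hunbp (max C₀ ⌈Cr⌉₊)
    obtain ⟨m₁, rfl⟩ := hy
    refine ⟨m₁, ?_, ?_, ?_⟩
    · by_contra hcon
      push_neg at hcon
      have : a m₁ ≤ C₀ := Finset.le_sup (Finset.mem_range.2 hcon)
      have : a m₁ ≤ max C₀ ⌈Cr⌉₊ := le_trans this (le_max_left _ _)
      exact absurd hylt (not_lt.2 this)
    · have h1 : (⌈Cr⌉₊ : ℕ) < a m₁ := lt_of_le_of_lt (le_max_right C₀ _) hylt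
      have h2 : Cr ≤ (⌈Cr⌉₊ : ℝ) := Nat.le_ceil Cr
      have h3 : ((⌈Cr⌉₊ : ℕ) : ℝ) ≤ (a m₁ : ℝ) := by exact_mod_cast le_of_lt h1
      have h4 : T ≤ Cr := le_max_left _ _
      linarith
    · have h1 : (⌈Cr⌉₊ : ℕ) < a m₁ := lt_of_le_of_lt (le_max_right C₀ _) hylt
      have h2 : Cr ≤ (⌈Cr⌉₊ : ℝ) := Nat.le_ceil Cr
      have h3 : ((⌈Cr⌉₊ : ℕ) : ℝ) ≤ (a m₁ : ℝ) := by exact_mod_cast le_of_lt h1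
      have h4 : 2*K+1 ≤ Cr := le_max_right _ _
      linarith
  have hm₁pos : 0 < m₁ := by
    by_contra hcon
    push_neg at hcon
    interval_cases m₁
    · simp only [ha, Function.iterate_zero, id_eq, SimpleGraph.dist_self] at hm₁2K
      push_cast at hm₁2K
      linarith
  have hgrow : ∀ s : ℕ, 1 ≤ s → (a m₁ : ℝ) ≤ (a (s * m₁) : ℝ) := by
    intro s hs
    induction s with
    | zero => omega
    | succ m ih =>
        rcases Nat.eq_zero_or_pos m with hm | hm
        · subst hm; simp
        · have ih' := ih hm
          have h1 := hsuper (m * m₁) m₁ (le_trans hm₁N₀ (Nat.le_mul_of_pos_left _ hm)) hm₁N₀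
          have e : m * m₁ + m₁ = (m+1) * m₁ := by ring
          rw [e] at h1
          linarith
  have hH₁0 : 0 ≤ H₁ := by rw [hH₁]; linarith
  -- ===== the finite ball B =====
  set B : Set V := {z : V | (Γ.dist p z : ℝ) ≤ H₁} with hB
  have hBfin : B.Finite := by
    apply Set.Finite.subset (AxisAux.ball_finite hconn hlf p ⌊H₁⌋₊)
    intro z hz
    simp only [hB, Set.mem_setOf_eq] at hz ⊢
    exact Nat.le_floor hz
  have hpB : p ∈ B := by
    simp only [hB, Set.mem_setOf_eq, SimpleGraph.dist_self]
    push_cast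
    linarith
  -- ===== F and its crossing property =====
  set F : ℕ → V → V → ℕ := fun s x y => Γ.dist x ((⇑g)^[s * m₁] y) with hF
  have htri : ∀ (s t : ℕ) (x y z : V), F (s+t) x y ≤ F s x z + F t z y := by
    intro s t x y z
    have h1 : (⇑g)^[(s+t) * m₁] y = (⇑g)^[s * m₁] ((⇑g)^[t * m₁] y) := by
      rw [← Function.iterate_add_apply]
      congr 1
      ring
    have h2 : Γ.dist ((⇑g)^[s*m₁] z) ((⇑g)^[s*m₁] ((⇑g)^[t*m₁] y)) = Γ.dist z ((⇑g)^[t*m₁] y) :=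
      hdit _ _ _
    calc F (s+t) x y = Γ.dist x ((⇑g)^[s*m₁] ((⇑g)^[t*m₁] y)) := by rw [hF]; simp only []; rw [h1]
      _ ≤ Γ.dist x ((⇑g)^[s*m₁] z) + Γ.dist ((⇑g)^[s*m₁] z) ((⇑g)^[s*m₁] ((⇑g)^[t*m₁] y)) :=
          hconn.dist_triangle
      _ = F s x z + F t z y := by rw [h2]
  have hcross : ∀ s t : ℕ, 1 ≤ s → 1 ≤ t → ∀ x y : V, x ∈ B → y ∈ B →
      ∃ z' ∈ B, F (s+t) x y = F s x z' + F t z' y := by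
    intro s t hs ht x y hx hy
    set w := (⇑g)^[s * m₁] p with hw
    set Y := (⇑g)^[(s+t) * m₁] y with hY
    set Y' := (⇑g)^[(s+t) * m₁] p with hY'
    have hsm : N₀ ≤ s * m₁ := le_trans hm₁N₀ (Nat.le_mul_of_pos_left _ hs)
    have htm : N₀ ≤ t * m₁ := le_trans hm₁N₀ (Nat.le_mul_of_pos_left _ ht)
    have hasm : T ≤ (a (s*m₁) : ℝ) := le_trans hm₁big (hgrow s hs)
    have hatm : T ≤ (a (t*m₁) : ℝ) := le_trans hm₁big (hgrow t ht)
    have hxp : (Γ.dist p x : ℝ) ≤ H₁ := hx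
    have hyp' : (Γ.dist p y : ℝ) ≤ H₁ := hy
    -- gGP w p Y' ≤ K
    have hpY' : gGP Γ w p Y' ≤ K := by
      have he : ∀ u v : V, Γ.dist ((⇑g.symm)^[s*m₁] u) ((⇑g.symm)^[s*m₁] v) = Γ.dist u v :=
        hdit' _
      have h1 : (⇑g.symm)^[s*m₁] w = p := hLI' _ _
      have h2 : (⇑g.symm)^[s*m₁] Y' = (⇑g)^[t*m₁] p := by
        rw [hY']
        have e : (s+t) * m₁ = s*m₁ + t*m₁ := by ring
        rw [e, Function.iterate_add_apply]
        exact hLI' _ _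
      have h3 := AxisAux.gGP_map (Γ := Γ) ((⇑g.symm)^[s*m₁]) he w p Y'
      rw [h1, h2] at h3
      rw [← h3, AxisAux.gGP_comm]
      exact hKbd (t*m₁) (s*m₁) htm hsm
    have hdwp : Γ.dist w p = a (s*m₁) := by
      rw [SimpleGraph.dist_comm]
    have hpx : (a (s*m₁) : ℝ) - H₁ ≤ gGP Γ w p x := by
      have h1 := AxisAux.gGP_ge_sub hconn w p x
      rw [hdwp] at h1
      linarith
    have hYx : gGP Γ w Y' x ≤ K + δ := by
      by_contra hcon
      push_neg at hcon
      have h4 := hhyp w p Y' x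
      have h1 : K + δ < min (gGP Γ w p x) (gGP Γ w Y' x) := by
        refine lt_min ?_ hcon
        have h5 : K + 2*δ + 1 ≤ (a (s*m₁):ℝ) - H₁ := by
          rw [hT] at hasm
          linarith
        linarith
      linarith
    have hY'Y : (a (t*m₁) : ℝ) - H₁ ≤ gGP Γ w Y' Y := by
      have h1 := AxisAux.gGP_ge_sub hconn w Y' Y
      have h2 : Γ.dist w Y' = a (t*m₁) := by
        rw [hw, hY']
        have e : (s+t)*m₁ = s*m₁ + t*m₁ := by ring
        rw [e]
        rw [Function.iterate_add_apply]
        exact hdit (s*m₁) p ((⇑g)^[t*m₁] p)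
      have h3 : Γ.dist Y' Y = Γ.dist p y := by
        rw [hY', hY]
        exact hdit _ _ _
      rw [h2, h3] at h1
      linarith
    have hxY : gGP Γ w x Y ≤ K + 2*δ := by
      by_contra hcon
      push_neg at hcon
      have h4 := hhyp w x Y' Y
      have h1 : K + 2*δ < min (gGP Γ w x Y) (gGP Γ w Y' Y) := by
        refine lt_min hcon ?_
        have h5 : K + 2*δ + 1 ≤ (a (t*m₁):ℝ) - H₁ := by
          rw [hT] at hatm
          linarith
        linarith
      have h5 : gGP Γ w x Y' ≤ K + δ := by
        rw [AxisAux.gGP_comm]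
        exact hYx
      linarith
    obtain ⟨z, hzsplit, hzd⟩ := AxisAux.balanced_point hconn hδ hhyp x Y w
    have hzw : (Γ.dist w z : ℝ) ≤ H₁ := by
      rw [hH₁]
      linarith
    set z' := (⇑g.symm)^[s*m₁] z with hz'
    have hgz' : (⇑g)^[s*m₁] z' = z := hLI _ _
    have hz'B : z' ∈ B := by
      have h1 : Γ.dist p z' = Γ.dist w z := by
        rw [← hdit (s*m₁) p z', hgz']
      simp only [hB, Set.mem_setOf_eq]
      rw [h1]
      exact hzw
    refine ⟨z', hz'B, ?_⟩
    have e1 : F s x z' = Γ.dist x z := by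
      simp only [hF]
      rw [hgz']
    have e2 : F t z' y = Γ.dist z Y := by
      simp only [hF]
      rw [← hdit (s*m₁) z' ((⇑g)^[t*m₁] y), hgz', ← Function.iterate_add_apply]
      have e : s*m₁ + t*m₁ = (s+t)*m₁ := by ring
      rw [e]
    rw [e1, e2]
    exact hzsplit.symm
  -- ===== chain decomposition of F =====
  set ww : V → V → ℕ := fun z z' => Γ.dist z ((⇑g)^[m₁] z') with hww
  have hF1 : ∀ x y : V, F 1 x y = ww x y := by
    intro x y
    simp only [hF, hww, one_mul]
  have hdecomp : ∀ s : ℕ, 1 ≤ s → ∀ x y : V, x ∈ B → y ∈ B →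
      ∃ c : ℕ → V, c 0 = x ∧ c s = y ∧ (∀ r ≤ s, c r ∈ B) ∧ AxisAux.chainWt ww c s = F s x y := by
    intro s
    induction s with
    | zero => omega
    | succ m ih =>
        intro _ x y hx hy
        rcases Nat.eq_zero_or_pos m with hm | hm
        · subst hm
          refine ⟨fun r => if r = 0 then x else y, by simp, by simp, ?_, ?_⟩
          · intro r hr
            interval_cases r
            · simpa using hx
            · simpa using hy
          · rw [AxisAux.chainWt]
            rw [Finset.sum_range_one]
            simp only [if_pos rfl, if_neg (by omega : (1:ℕ) ≠ 0)]
            exact (hF1 x y).symm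
        · obtain ⟨z, hzB, hzeq⟩ := hcross m 1 hm le_rfl x y hx hy
          obtain ⟨c, hc0, hcm, hcB, hcw⟩ := ih hm x z hx hzB
          refine ⟨fun r => if r ≤ m then c r else y, ?_, ?_, ?_, ?_⟩
          · simp only [if_pos (Nat.zero_le m)]
            exact hc0
          · simp only [if_neg (by omega : ¬ (m+1 ≤ m))]
          · intro r hr
            by_cases h : r ≤ m
            · simp only [if_pos h]
              exact hcB r h
            · simp only [if_neg h]
              exact hy
          · rw [AxisAux.chainWt, Finset.sum_range_succ]
            have hsum : ∑ r ∈ Finset.range m,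
                ww ((fun r => if r ≤ m then c r else y) r) ((fun r => if r ≤ m then c r else y) (r+1))
                = AxisAux.chainWt ww c m := by
              rw [AxisAux.chainWt]
              apply Finset.sum_congr rfl
              intro r hr
              simp only [Finset.mem_range] at hr
              simp only [if_pos (by omega : r ≤ m), if_pos (by omega : r + 1 ≤ m)]
            rw [hsum, hcw]
            simp only [if_pos (le_refl m), if_neg (by omega : ¬ (m+1 ≤ m))]
            rw [hcm, hzeq, hF1]
  have hchain_upper : ∀ (l : ℕ) (c : ℕ → V), F l (c 0) (c l) ≤ AxisAux.chainWt ww c l := by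
    intro l
    induction l with
    | zero =>
        intro c
        simp only [hF, AxisAux.chainWt, Nat.zero_mul, Function.iterate_zero, id_eq,
          SimpleGraph.dist_self, Finset.range_zero, Finset.sum_empty, le_refl]
    | succ m ih =>
        intro c
        have h1 := htri m 1 (c 0) (c (m+1)) (c m)
        have h2 := ih c
        have h3 : F 1 (c m) (c (m+1)) = ww (c m) (c (m+1)) := hF1 _ _
        rw [AxisAux.chainWt, Finset.sum_range_succ]
        rw [AxisAux.chainWt] at h2
        omega
  -- ===== minimum mean cycle =====
  obtain ⟨L₀, W₀, c₀, hL₀pos, ⟨hc₀c, hc₀B, hc₀w⟩, hlower⟩ :=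
    AxisAux.exists_min_cycle B hBfin ⟨p, hpB⟩ ww
  set x₀ := c₀ 0 with hx₀
  have hx₀B : x₀ ∈ B := hc₀B 0 (Nat.zero_le _)
  have hFLle : F L₀ x₀ x₀ ≤ W₀ := by
    have h1 := hchain_upper L₀ c₀
    rw [hc₀w] at h1
    rw [← hc₀c] at h1
    exact h1
  have hFsle : ∀ s : ℕ, F (s * L₀) x₀ x₀ ≤ s * W₀ := by
    intro s
    induction s with
    | zero =>
        simp only [Nat.zero_mul, hF, Function.iterate_zero, id_eq, SimpleGraph.dist_self, le_refl]
    | succ m ih =>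
        have h1 := htri (m*L₀) L₀ x₀ x₀ x₀
        have e : (m+1) * L₀ = m*L₀ + L₀ := by ring
        rw [e]
        calc F (m*L₀ + L₀) x₀ x₀ ≤ F (m*L₀) x₀ x₀ + F L₀ x₀ x₀ := h1
          _ ≤ m*W₀ + W₀ := Nat.add_le_add ih hFLle
          _ = (m+1)*W₀ := by ring
  have hFsge : ∀ s : ℕ, 1 ≤ s → W₀ * s ≤ F (s * L₀) x₀ x₀ := by
    intro s hs
    have hsl : 1 ≤ s * L₀ := Nat.one_le_iff_ne_zero.2 (by positivity)
    obtain ⟨c, hc0, hcl, hcB, hcw⟩ := hdecomp (s*L₀) hsl x₀ x₀ hx₀B hx₀B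
    have h1 := hlower (s*L₀) c (by rw [hc0, hcl]) hcB
    rw [hcw] at h1
    have h2 : (W₀ * s) * L₀ ≤ F (s*L₀) x₀ x₀ * L₀ := by
      calc (W₀ * s) * L₀ = W₀ * (s * L₀) := by ring
        _ ≤ _ := h1
    exact Nat.le_of_mul_le_mul_right h2 hL₀pos
  have hFs : ∀ s : ℕ, 1 ≤ s → F (s*L₀) x₀ x₀ = s * W₀ := by
    intro s hs
    have h1 := hFsle s
    have h2 := hFsge s hs
    have h3 := Nat.mul_comm s W₀
    omega
  have hW₀pos : 0 < W₀ := by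
    by_contra hcon
    push_neg at hcon
    have hW0 : W₀ = 0 := by omega
    have h1 : F L₀ x₀ x₀ = 0 := by
      have := hFs 1 le_rfl
      rw [one_mul] at this
      omega
    have h2 : (⇑g)^[L₀ * m₁] x₀ = x₀ := by
      have h3 : Γ.dist x₀ ((⇑g)^[L₀*m₁] x₀) = 0 := h1
      exact ((hconn.dist_eq_zero_iff).1 h3).symm
    have h3 : ∀ q : ℕ, (⇑g)^[q * (L₀*m₁)] x₀ = x₀ := by
      intro q
      induction q with
      | zero => simp
      | succ m ih =>
          have e : (m+1) * (L₀*m₁) = m * (L₀*m₁) + L₀*m₁ := by ring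
          rw [e, Function.iterate_add_apply, h2, ih]
    apply hunbdd x₀
    refine ⟨(Finset.range (L₀*m₁ + 1)).sup (fun r => Γ.dist x₀ ((⇑g)^[r] x₀)), ?_⟩
    rintro d ⟨k, rfl⟩
    have hDpos : 0 < L₀ * m₁ := Nat.mul_pos hL₀pos hm₁pos
    have h4 : (⇑g)^[k] x₀ = (⇑g)^[k % (L₀*m₁)] x₀ := by
      calc (⇑g)^[k] x₀ = (⇑g)^[k % (L₀*m₁) + k/(L₀*m₁) * (L₀*m₁)] x₀ := by
            rw [Nat.mod_add_div']
        _ = (⇑g)^[k % (L₀*m₁)] ((⇑g)^[k/(L₀*m₁) * (L₀*m₁)] x₀) :=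
            Function.iterate_add_apply _ _ _ _
        _ = (⇑g)^[k % (L₀*m₁)] x₀ := by rw [h3]
    simp only []
    rw [h4]
    apply Finset.le_sup (f := fun r => Γ.dist x₀ ((⇑g)^[r] x₀))
    refine Finset.mem_range.2 ?_
    have := Nat.mod_lt k hDpos
    omega
  -- ===== the axis =====
  set n := L₀ * m₁ with hn
  have hnpos : 0 < n := Nat.mul_pos hL₀pos hm₁pos
  have hper : ∀ s : ℕ, Γ.dist x₀ ((⇑g)^[s * n] x₀) = s * W₀ := by
    intro s
    rcases Nat.eq_zero_or_pos s with h | h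
    · subst h; simp
    · have h1 := hFs s h
      simp only [hF] at h1
      have e : (s*L₀)*m₁ = s*n := by rw [hn]; ring
      rw [e] at h1
      exact h1
  obtain ⟨σw, hσlen⟩ := hconn.exists_walk_length_eq_dist x₀ ((⇑g)^[n] x₀)
  have hσW : σw.length = W₀ := by
    rw [hσlen]
    have := hper 1
    rw [one_mul, one_mul] at this
    exact this
  set σ : ℕ → V := fun r => σw.getVert r with hσ
  have hσ0 : σ 0 = x₀ := σw.getVert_zero
  have hsplitσ : ∀ r : ℕ, r ≤ W₀ → Γ.dist x₀ (σ r) = r ∧ Γ.dist (σ r) ((⇑g)^[n] x₀) = W₀ - r := by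
    intro r hr
    have h1 := AxisAux.shortest_walk_split hconn σw hσlen r (by omega)
    rw [hσW] at h1
    exact h1
  have hσσ : ∀ r r' : ℕ, r ≤ r' → r' ≤ W₀ → Γ.dist (σ r) (σ r') = r' - r := by
    intro r r' hrr hr'
    have h1 : Γ.dist (σ r) (σ r') ≤ r' - r := by
      have h2 := AxisAux.dist_getVert_getVert hconn σw r (r' - r)
      have e : r + (r' - r) = r' := by omega
      rw [e] at h2
      exact h2
    have h2 := (hsplitσ r (by omega)).1
    have h3 := (hsplitσ r' hr').1
    have h4 := hconn.dist_triangle (u := x₀) (v := σ r) (w := σ r')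
    omega
  have hKey : ∀ t r r' : ℕ, 1 ≤ t → r ≤ W₀ → r' ≤ W₀ →
      Γ.dist (σ r) ((⇑g)^[t * n] (σ r')) + r = t * W₀ + r' := by
    intro t r r' ht hr hr'
    have hmul : (t-1)*W₀ + W₀ = t*W₀ := by
      have e : t - 1 + 1 = t := by omega
      calc (t-1)*W₀ + W₀ = ((t-1)+1)*W₀ := by ring
        _ = t*W₀ := by rw [e]
    have hub : Γ.dist (σ r) ((⇑g)^[t*n] (σ r')) + r ≤ t*W₀ + r' := by
      have h1 : Γ.dist (σ r) ((⇑g)^[n] x₀) = W₀ - r := (hsplitσ r hr).2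
      have h2 : Γ.dist ((⇑g)^[n] x₀) ((⇑g)^[t*n] (σ r')) ≤ (t-1)*W₀ + r' := by
        have e : t*n = n + (t-1)*n := by
          have e2 : t - 1 + 1 = t := by omega
          calc t*n = ((t-1)+1)*n := by rw [e2]
            _ = n + (t-1)*n := by ring
        rw [e, Function.iterate_add_apply, hdit n]
        have h3 := hconn.dist_triangle (u := x₀) (v := (⇑g)^[(t-1)*n] x₀)
          (w := (⇑g)^[(t-1)*n] (σ r'))
        have h4 := hper (t-1)
        have h5 : Γ.dist ((⇑g)^[(t-1)*n] x₀) ((⇑g)^[(t-1)*n] (σ r')) = Γ.dist x₀ (σ r') :=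
          hdit _ _ _
        have h6 := (hsplitσ r' hr').1
        omega
      have htr := hconn.dist_triangle (u := σ r) (v := (⇑g)^[n] x₀) (w := (⇑g)^[t*n] (σ r'))
      omega
    have hlb : t*W₀ + W₀ ≤ r + (Γ.dist (σ r) ((⇑g)^[t*n] (σ r')) + (W₀ - r')) := by
      have h1 := hper (t+1)
      have htr1 := hconn.dist_triangle (u := x₀) (v := σ r) (w := (⇑g)^[(t+1)*n] x₀)
      have htr2 := hconn.dist_triangle (u := σ r) (v := (⇑g)^[t*n] (σ r'))
        (w := (⇑g)^[(t+1)*n] x₀)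
      have h2 : Γ.dist ((⇑g)^[t*n] (σ r')) ((⇑g)^[(t+1)*n] x₀) = W₀ - r' := by
        have e : (t+1)*n = t*n + n := by ring
        rw [e, Function.iterate_add_apply]
        rw [hdit (t*n)]
        exact (hsplitσ r' hr').2
      have h3 := (hsplitσ r hr).1
      have hmul2 : (t+1)*W₀ = t*W₀ + W₀ := by ring
      omega
    omega
  -- ===== ℤ-parametrized geodesic =====
  set gP : Equiv.Perm V := g with hgP
  have hpow : ∀ (m : ℕ) (x : V), (gP ^ m) x = (⇑g)^[m] x := by
    intro m x
    rw [Equiv.Perm.coe_pow]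
  have hpowz : ∀ (m : ℕ) (x : V), (gP ^ (m : ℤ)) x = (⇑g)^[m] x := by
    intro m x
    rw [zpow_natCast, hpow]
  have hTadd : ∀ (k l : ℤ) (x : V), (gP ^ (k + l)) x = (gP ^ k) ((gP ^ l) x) := by
    intro k l x
    rw [zpow_add]
    rfl
  have hTiso : ∀ (k : ℤ) (u v : V), Γ.dist ((gP ^ k) u) ((gP ^ k) v) = Γ.dist u v := by
    intro k u v
    rcases k with m | m
    · rw [Int.ofNat_eq_coe]
      rw [hpowz, hpowz]
      exact hdit m u v
    · rw [zpow_negSucc]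
      have h1 : ∀ x : V, (⇑g)^[m+1] (((gP ^ (m+1))⁻¹) x) = x := by
        intro x
        rw [← hpow]
        exact Equiv.apply_symm_apply _ _
      rw [← hdit (m+1) (((gP ^ (m+1))⁻¹) u) (((gP ^ (m+1))⁻¹) v), h1, h1]
  set Wz : ℤ := (W₀ : ℤ) with hWz
  have hWzpos : 0 < Wz := by rw [hWz]; exact_mod_cast hW₀pos
  set lam : ℤ → V := fun i => (gP ^ ((i / Wz) * (n:ℤ))) (σ (i % Wz).toNat) with hlam
  have hmod_lt : ∀ i : ℤ, (i % Wz).toNat < W₀ := by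
    intro i
    have h1 : i % Wz < Wz := Int.emod_lt_of_pos i hWzpos
    have h2 : 0 ≤ i % Wz := Int.emod_nonneg i (ne_of_gt hWzpos)
    omega
  have hmod_cast : ∀ i : ℤ, ((i % Wz).toNat : ℤ) = i % Wz := by
    intro i
    exact Int.toNat_of_nonneg (Int.emod_nonneg i (ne_of_gt hWzpos))
  have hdecompZ : ∀ i : ℤ, i = Wz * (i / Wz) + ((i % Wz).toNat : ℤ) := by
    intro i
    rw [hmod_cast]
    exact (Int.mul_ediv_add_emod i Wz).symm
  have main : ∀ i j : ℤ, i ≤ j → (Γ.dist (lam i) (lam j) : ℤ) = j - i := by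
    intro i j hij
    have hqq : i / Wz ≤ j / Wz := Int.ediv_le_ediv hWzpos hij
    have hiq := hdecompZ i
    have hjq := hdecompZ j
    set q := i / Wz with hq
    set q' := j / Wz with hq'
    set r := (i % Wz).toNat with hr
    set r' := (j % Wz).toNat with hr'
    have hred : Γ.dist (lam i) (lam j)
        = Γ.dist (σ r) ((gP ^ ((q' - q) * (n:ℤ))) (σ r')) := by
      have h1 := hTiso (q * (n:ℤ)) (σ r) ((gP ^ ((q' - q) * (n:ℤ))) (σ r'))
      have h2 : (gP ^ (q * (n:ℤ))) ((gP ^ ((q' - q) * (n:ℤ))) (σ r')) = lam j := by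
        rw [← hTadd]
        have e : q * (n:ℤ) + (q' - q) * (n:ℤ) = q' * (n:ℤ) := by ring
        rw [e]
      rw [h2] at h1
      rw [← h1]
    set t : ℕ := (q' - q).toNat with htdef
    have htq : (t : ℤ) = q' - q := Int.toNat_of_nonneg (by omega)
    rcases Nat.eq_zero_or_pos t with ht0 | htpos
    · have hqeq : q' = q := by omega
      rw [hqeq] at hjq
      have hrr' : r ≤ r' := by omega
      rw [hred]
      have e : (q' - q) * (n:ℤ) = 0 := by rw [hqeq]; ring
      rw [e]
      simp only [zpow_zero, Equiv.Perm.coe_one, id_eq]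
      have h1 := hσσ r r' hrr' (le_of_lt (hmod_lt j))
      rw [h1]
      have hcast : ((r' - r : ℕ) : ℤ) = (r' : ℤ) - (r : ℤ) := by
        omega
      rw [hcast]
      omega
    · have hgiter : (gP ^ ((q' - q) * (n:ℤ))) (σ r') = (⇑g)^[t * n] (σ r') := by
        have e : (q' - q) * (n:ℤ) = ((t * n : ℕ) : ℤ) := by
          rw [← htq]
          push_cast
          ring
        rw [e, hpowz]
      rw [hred, hgiter]
      have hk := hKey t r r' htpos (le_of_lt (hmod_lt i)) (le_of_lt (hmod_lt j))
      have hkz : (Γ.dist (σ r) ((⇑g)^[t * n] (σ r')) : ℤ) + (r : ℤ)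
          = (t:ℤ) * (W₀:ℤ) + (r':ℤ) := by
        exact_mod_cast hk
      have hji : j - i = (q' - q) * Wz + ((r':ℤ) - (r:ℤ)) := by
        linear_combination hjq - hiq
      rw [← htq] at hji
      rw [hWz] at hji
      omega
  refine ⟨lam, ?_, n, hnpos, Wz, hWzpos, ?_⟩
  · intro i j
    rcases le_total i j with h | h
    · have h1 := main i j h
      have h2 : |i - j| = j - i := by
        rw [abs_of_nonpos (by omega : i - j ≤ 0)]; ring
      omega
    · have h1 := main j i h
      rw [SimpleGraph.dist_comm] at h1
      have h2 : |i - j| = i - j := abs_of_nonneg (by omega : 0 ≤ i - j)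
      omega
  · intro i
    have hqd : (i + Wz) / Wz = i / Wz + 1 := by
      have e : i + Wz = i + 1 * Wz := by ring
      rw [e, Int.add_mul_ediv_right _ _ (ne_of_gt hWzpos)]
    have hrd : (i + Wz) % Wz = i % Wz := by
      have e : i + Wz = i + 1 * Wz := by ring
      rw [e]
      exact Int.add_mul_emod_self_right _ _ _
    show (⇑g)^[n] (lam i) = lam (i + Wz)
    simp only [hlam, hqd, hrd]
    rw [← hpowz n ((gP ^ ((i / Wz) * (n:ℤ))) (σ (i % Wz).toNat))]
    rw [← hTadd]
    congr 1
    ring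
end

section
/- Let G be a t.d.l.c. group acting vertex transitively with compact open vertex stabilisers on a connected locally finite δ-hyperbolic graph Γ, and let g, h ∈ G be hyperbolic elements, each acting as a translation along a bi-infinite geodesic, with the same attracting boundary point ω₊(g) = ω₊(h). Then for vertices u₀, v₀ on the respective geodesics, the indices [gᵏG_{u₀}g⁻ᵏ : gᵏG_{u₀}g⁻ᵏ ∩ hᵏG_{v₀}h⁻ᵏ] are bounded uniformly in k ∈ ℕ. -/
section AuxLemmas

variable {V G : Type*} [Group G] [MulAction G V] {Γ : SimpleGraph V}

/-- Each group element acts as a distance non-increasing map (in fact an isometry). -/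
private lemma graph_dist_smul_le
    (hconn : Γ.Connected)
    (hact : ∀ (g : G) (u w : V), Γ.Adj u w → Γ.Adj (g • u) (g • w))
    (g : G) (u v : V) : Γ.dist (g • u) (g • v) ≤ Γ.dist u v := by
  obtain ⟨p, hp⟩ := hconn.exists_walk_length_eq_dist u v
  have h := SimpleGraph.dist_le
    (p.map (⟨fun w => g • w, fun hadj => hact g _ _ hadj⟩ : Γ →g Γ))
  rwa [SimpleGraph.Walk.length_map, hp] at h

/-- Each group element acts as an isometry of the graph metric. -/
private lemma graph_dist_smul
    (hconn : Γ.Connected)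
    (hact : ∀ (g : G) (u w : V), Γ.Adj u w → Γ.Adj (g • u) (g • w))
    (g : G) (u v : V) : Γ.dist (g • u) (g • v) = Γ.dist u v := by
  refine le_antisymm (graph_dist_smul_le hconn hact g u v) ?_
  have h := graph_dist_smul_le hconn hact g⁻¹ (g • u) (g • v)
  simpa using h

/-- Balls in a connected locally finite graph are finite. -/
private lemma graph_ball_finite
    (hconn : Γ.Connected) (hlf : ∀ v : V, (Γ.neighborSet v).Finite)
    (x : V) (n : ℕ) : {w : V | Γ.dist x w ≤ n}.Finite := by
  induction n with
  | zero =>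
    refine Set.Finite.subset (Set.finite_singleton x) ?_
    intro w hw
    simp only [Set.mem_setOf_eq, Nat.le_zero] at hw
    obtain ⟨p, hp⟩ := hconn.exists_walk_length_eq_dist x w
    rw [hw] at hp
    simp [ (SimpleGraph.Walk.eq_of_length_eq_zero hp).symm ]
  | succ n ih =>
    refine Set.Finite.subset
      ((ih.union (Set.Finite.biUnion ih (fun v _ => hlf v)))) ?_
    intro w hw
    simp only [Set.mem_setOf_eq] at hw
    rcases Nat.lt_or_ge (Γ.dist x w) (n + 1) with hlt | hge
    · exact Or.inl (Nat.lt_succ_iff.mp hlt)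
    · have hd : Γ.dist x w = n + 1 := le_antisymm hw hge
      obtain ⟨p, hp⟩ := hconn.exists_walk_length_eq_dist x w
      rw [hd] at hp
      right
      -- look at the reversed walk, whose first step leaves `w`
      have hrev : p.reverse.length = n + 1 := by
        rw [SimpleGraph.Walk.length_reverse, hp]
      cases hq : p.reverse with
      | nil => rw [hq] at hrev; simp at hrev
      | @cons _ v _ hadj q =>
        rw [hq] at hrev
        simp only [SimpleGraph.Walk.length_cons, Nat.succ.injEq] at hrev
        have hdv : Γ.dist x v ≤ n := by
          have := SimpleGraph.dist_le q.reverse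
          rwa [SimpleGraph.Walk.length_reverse, hrev] at this
        refine Set.mem_biUnion (s := {w : V | Γ.dist x w ≤ n}) hdv ?_
        exact hadj.symm

/-- The relative index of two vertex stabilisers is bounded by the size of a ball. -/
private lemma relindex_stabilizer_le
    (hconn : Γ.Connected) (hlf : ∀ v : V, (Γ.neighborSet v).Finite)
    (hact : ∀ (g : G) (u w : V), Γ.Adj u w → Γ.Adj (g • u) (g • w))
    {x y : V} {R : ℕ} (hd : Γ.dist x y ≤ R) :
    (MulAction.stabilizer G y).relIndex (MulAction.stabilizer G x)
      ≤ {w : V | Γ.dist x w ≤ R}.ncard := by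
  set A := MulAction.stabilizer G x with hA
  have h1 : (MulAction.stabilizer G y).subgroupOf A = MulAction.stabilizer A y := by
    ext a
    simp only [Subgroup.mem_subgroupOf, MulAction.mem_stabilizer_iff]
    rw [Subgroup.mk_smul]
  rw [Subgroup.relIndex, h1, MulAction.index_stabilizer]
  refine Set.ncard_le_ncard ?_ (graph_ball_finite hconn hlf x R)
  rintro w ⟨a, rfl⟩
  have haG : (a : G) • y = a • y := rfl
  have hax : (a : G) • x = x := a.2
  simp only [Set.mem_setOf_eq]
  calc Γ.dist x (a • y) = Γ.dist ((a : G) • x) ((a : G) • y) := by rw [hax, haG]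
    _ = Γ.dist x y := graph_dist_smul hconn hact _ _ _
    _ ≤ R := hd

/-- Vertex transitivity: all balls of a given radius have the same cardinality. -/
private lemma ncard_ball_eq
    (hconn : Γ.Connected)
    (hact : ∀ (g : G) (u w : V), Γ.Adj u w → Γ.Adj (g • u) (g • w))
    (htrans : ∀ u w : V, ∃ g : G, g • u = w)
    (x y : V) (R : ℕ) :
    {w : V | Γ.dist x w ≤ R}.ncard = {w : V | Γ.dist y w ≤ R}.ncard := by
  obtain ⟨t, ht⟩ := htrans x y
  have himg : (t • ·) '' {w : V | Γ.dist x w ≤ R} = {w : V | Γ.dist y w ≤ R} := by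
    ext w
    constructor
    · rintro ⟨u, hu, rfl⟩
      simp only [Set.mem_setOf_eq] at hu ⊢
      rw [← ht, graph_dist_smul hconn hact]
      exact hu
    · intro hw
      refine ⟨t⁻¹ • w, ?_, by simp⟩
      simp only [Set.mem_setOf_eq] at hw ⊢
      have h2 : Γ.dist (t⁻¹ • y) (t⁻¹ • w) = Γ.dist y w :=
        graph_dist_smul hconn hact t⁻¹ y w
      rw [← ht, inv_smul_smul] at h2
      rw [h2, ht]
      exact hw
  rw [← himg, Set.ncard_image_of_injective _ (MulAction.injective t)]

end AuxLemmas

/-- If `g, h` act as translations (of the same translation length `m`) along bi-infinite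
geodesics `γg, γh` with the same attracting boundary point, then the indices
`[gᵏ G_{u₀} g⁻ᵏ : gᵏ G_{u₀} g⁻ᵏ ∩ hᵏ G_{v₀} h⁻ᵏ]` (with `u₀ = γg 0`, `v₀ = γh 0`) are
bounded uniformly in `k`. -/
theorem indices_bounded_of_same_attracting_point
    {V G : Type*} (Γ : SimpleGraph V)
    [Group G] [TopologicalSpace G] [IsTopologicalGroup G] [T2Space G]
    [LocallyCompactSpace G] [TotallyDisconnectedSpace G] [MulAction G V]
    (δ : ℝ) (hδ : 0 ≤ δ)
    (hconn : Γ.Connected) (hlf : ∀ v : V, (Γ.neighborSet v).Finite) (hhyp : GraphHyp Γ δ)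
    (hact : ∀ (g : G) (u w : V), Γ.Adj u w → Γ.Adj (g • u) (g • w))
    (htrans : ∀ u w : V, ∃ g : G, g • u = w)
    (hstab : ∀ v : V, IsCompact ((MulAction.stabilizer G v : Subgroup G) : Set G) ∧
      IsOpen ((MulAction.stabilizer G v : Subgroup G) : Set G))
    (g h : G) (γg γh : ℤ → V) (m : ℕ) (hm : 0 < m)
    (hγg : ∀ i j : ℤ, (Γ.dist (γg i) (γg j) : ℤ) = |i - j|)
    (hγh : ∀ i j : ℤ, (Γ.dist (γh i) (γh j) : ℤ) = |i - j|)
    (htrg : ∀ i : ℤ, g • γg i = γg (i + m))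
    (htrh : ∀ i : ℤ, h • γh i = γh (i + m))
    (hsame : gEquivAtInf Γ (γg 0) (fun k => g ^ k • γg 0) (fun k => h ^ k • γh 0)) :
    ∃ C : ℕ, ∀ k : ℕ,
      ((MulAction.stabilizer G (γh 0)).map (MulAut.conj (h ^ k)).toMonoidHom).relIndex
        ((MulAction.stabilizer G (γg 0)).map (MulAut.conj (g ^ k)).toMonoidHom) ≤ C := by
  classical
  set p : V := γg 0 with hp
  set D : ℕ := Γ.dist (γg 0) (γh 0) with hD
  -- the orbits along the geodesics
  have ha : ∀ k : ℕ, g ^ k • γg 0 = γg ((k : ℤ) * m) := by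
    intro k
    induction k with
    | zero => simp
    | succ k ih =>
      have hstep : g ^ (k + 1) • γg 0 = g • (g ^ k • γg 0) := by
        rw [pow_succ', mul_smul]
      rw [hstep, ih, htrg]
      congr 1
      push_cast
      ring
  have hb : ∀ k : ℕ, h ^ k • γh 0 = γh ((k : ℤ) * m) := by
    intro k
    induction k with
    | zero => simp
    | succ k ih =>
      have hstep : h ^ (k + 1) • γh 0 = h • (h ^ k • γh 0) := by
        rw [pow_succ', mul_smul]
      rw [hstep, ih, htrh]
      congr 1
      push_cast
      ring
  -- real versions of the geodesic distance formulas
  have hγgR : ∀ s t : ℤ, (Γ.dist (γg s) (γg t) : ℝ) = |(s : ℝ) - t| := by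
    intro s t
    have := congrArg (Int.cast : ℤ → ℝ) (hγg s t)
    push_cast at this
    exact this
  have hγhR : ∀ s t : ℤ, (Γ.dist (γh s) (γh t) : ℝ) = |(s : ℝ) - t| := by
    intro s t
    have := congrArg (Int.cast : ℤ → ℝ) (hγh s t)
    push_cast at this
    exact this
  -- basic distance facts (as reals)
  have hmR : (0 : ℝ) < m := by exact_mod_cast hm
  have hpa : ∀ k : ℕ, (Γ.dist p (g ^ k • γg 0) : ℝ) = (k : ℝ) * m := by
    intro k
    have hkm : (0 : ℝ) ≤ (k : ℝ) * m := by positivity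
    rw [ha k, hp, hγgR]
    rw [abs_of_nonpos (by push_cast; linarith)]
    push_cast; ring
  have haa : ∀ k i : ℕ, k ≤ i →
      (Γ.dist (g ^ k • γg 0) (g ^ i • γg 0) : ℝ) = ((i : ℝ) - k) * m := by
    intro k i hki
    rw [ha k, ha i, hγgR]
    rw [abs_of_nonpos]
    · push_cast; ring
    · have hki' : (k : ℝ) ≤ i := by exact_mod_cast hki
      push_cast
      nlinarith
  have hbb : ∀ k i : ℕ, k ≤ i →
      (Γ.dist (h ^ k • γh 0) (h ^ i • γh 0) : ℝ) = ((i : ℝ) - k) * m := by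
    intro k i hki
    rw [hb k, hb i, hγhR]
    rw [abs_of_nonpos]
    · push_cast; ring
    · have hki' : (k : ℝ) ≤ i := by exact_mod_cast hki
      push_cast
      nlinarith
  have hv0b : ∀ k : ℕ, (Γ.dist (γh 0) (h ^ k • γh 0) : ℝ) = (k : ℝ) * m := by
    intro k
    have hkm : (0 : ℝ) ≤ (k : ℝ) * m := by positivity
    rw [hb k, hγhR]
    rw [abs_of_nonpos (by push_cast; linarith)]
    push_cast; ring
  -- distance from p to points of the second geodesic, up to D
  have hpb_ub : ∀ k : ℕ, (Γ.dist p (h ^ k • γh 0) : ℝ) ≤ (k : ℝ) * m + D := by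
    intro k
    have htr := hconn.dist_triangle (u := p) (v := γh 0) (w := h ^ k • γh 0)
    have : (Γ.dist p (h ^ k • γh 0) : ℝ) ≤ (Γ.dist p (γh 0) : ℝ) + (Γ.dist (γh 0) (h ^ k • γh 0) : ℝ) := by
      exact_mod_cast htr
    rw [hv0b k] at this
    rw [hp] at this ⊢
    linarith [this]
  have hpb_lb : ∀ k : ℕ, (k : ℝ) * m - D ≤ (Γ.dist p (h ^ k • γh 0) : ℝ) := by
    intro k
    have htr := hconn.dist_triangle (u := γh 0) (v := p) (w := h ^ k • γh 0)
    have : (Γ.dist (γh 0) (h ^ k • γh 0) : ℝ) ≤ (Γ.dist (γh 0) p : ℝ) + (Γ.dist p (h ^ k • γh 0) : ℝ) := by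
      exact_mod_cast htr
    rw [hv0b k] at this
    have hcomm : Γ.dist (γh 0) p = Γ.dist p (γh 0) := SimpleGraph.dist_comm
    rw [hcomm, hp] at this
    linarith [this]
  have hD0 : (0 : ℝ) ≤ D := Nat.cast_nonneg D
  -- the key uniform bound on d(g^k u0, h^k v0)
  have hkey : ∀ k : ℕ, (Γ.dist (g ^ k • γg 0) (h ^ k • γh 0) : ℝ) ≤ 3 * D + 4 * δ := by
    intro k
    obtain ⟨N, hN⟩ := hsame ((k : ℝ) * m)
    set i : ℕ := max N k with hi
    have hiN : N ≤ i := le_max_left _ _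
    have hik : k ≤ i := le_max_right _ _
    -- Gromov products
    have h1 : (k : ℝ) * m ≤ gGP Γ p (g ^ i • γg 0) (h ^ i • γh 0) := hN i i hiN hiN
    have h2 : gGP Γ p (g ^ k • γg 0) (g ^ i • γg 0) = (k : ℝ) * m := by
      unfold gGP
      rw [hpa k, hpa i, haa k i hik]
      ring
    have h3 : (k : ℝ) * m - D ≤ gGP Γ p (h ^ k • γh 0) (h ^ i • γh 0) := by
      unfold gGP
      rw [hbb k i hik]
      have l1 := hpb_lb k
      have l2 := hpb_lb i
      linarith
    -- symmetry of the Gromov product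
    have hsymm : ∀ x y : V, gGP Γ p x y = gGP Γ p y x := by
      intro x y
      unfold gGP
      rw [SimpleGraph.dist_comm (u := x) (v := y)]
      ring
    -- first application of hyperbolicity
    have hyp1 := hhyp p (g ^ i • γg 0) (h ^ k • γh 0) (h ^ i • γh 0)
    have h4 : (k : ℝ) * m - D - δ ≤ gGP Γ p (g ^ i • γg 0) (h ^ k • γh 0) := by
      have hmin : (k : ℝ) * m - D ≤
          min (gGP Γ p (g ^ i • γg 0) (h ^ i • γh 0))
            (gGP Γ p (h ^ k • γh 0) (h ^ i • γh 0)) :=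
        le_min (by linarith) h3
      linarith [hyp1]
    -- second application of hyperbolicity
    have hyp2 := hhyp p (g ^ k • γg 0) (h ^ k • γh 0) (g ^ i • γg 0)
    have h5 : (k : ℝ) * m - D - 2 * δ ≤ gGP Γ p (g ^ k • γg 0) (h ^ k • γh 0) := by
      rw [hsymm (h ^ k • γh 0) (g ^ i • γg 0)] at hyp2
      have hmin : (k : ℝ) * m - D - δ ≤
          min (gGP Γ p (g ^ k • γg 0) (g ^ i • γg 0))
            (gGP Γ p (g ^ i • γg 0) (h ^ k • γh 0)) := by
        refine le_min ?_ h4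
        rw [h2]; linarith
      linarith [hyp2]
    -- unfold the Gromov product into a distance bound
    have hgp : gGP Γ p (g ^ k • γg 0) (h ^ k • γh 0) =
        ((Γ.dist p (g ^ k • γg 0) : ℝ) + (Γ.dist p (h ^ k • γh 0) : ℝ)
          - (Γ.dist (g ^ k • γg 0) (h ^ k • γh 0) : ℝ)) / 2 := rfl
    rw [hgp] at h5
    have l1 := hpa k
    have l2 := hpb_ub k
    linarith
  -- convert to a natural-number radius
  set R : ℕ := 3 * D + Nat.ceil (4 * δ) with hR
  have hRk : ∀ k : ℕ, Γ.dist (g ^ k • γg 0) (h ^ k • γh 0) ≤ R := by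
    intro k
    have h1 := hkey k
    have h2 : (3 * D + 4 * δ : ℝ) ≤ (R : ℝ) := by
      rw [hR]
      push_cast
      have := Nat.le_ceil (4 * δ)
      linarith
    exact_mod_cast h1.trans h2
  -- the uniform constant
  refine ⟨{w : V | Γ.dist (γg 0) w ≤ R}.ncard, fun k => ?_⟩
  have hmapg : (MulAction.stabilizer G (γg 0)).map (MulAut.conj (g ^ k)).toMonoidHom
      = MulAction.stabilizer G (g ^ k • γg 0) :=
    (MulAction.stabilizer_smul_eq_stabilizer_map_conj (g ^ k) (γg 0)).symm
  have hmaph : (MulAction.stabilizer G (γh 0)).map (MulAut.conj (h ^ k)).toMonoidHom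
      = MulAction.stabilizer G (h ^ k • γh 0) :=
    (MulAction.stabilizer_smul_eq_stabilizer_map_conj (h ^ k) (γh 0)).symm
  rw [hmapg, hmaph]
  calc (MulAction.stabilizer G (h ^ k • γh 0)).relIndex (MulAction.stabilizer G (g ^ k • γg 0))
      ≤ {w : V | Γ.dist (g ^ k • γg 0) w ≤ R}.ncard :=
        relindex_stabilizer_le hconn hlf hact (hRk k)
    _ = {w : V | Γ.dist (γg 0) w ≤ R}.ncard :=
        ncard_ball_eq hconn hact htrans _ _ R
end
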